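/- arXiv:1903.03416 — 6 statements merged into one kernel-verified Lean document; each statement's English description precedes it below -/
import Mathlib

section
/- Let 0 < ε ≤ 1/4 and C₀ ≥ 1. There is a constant C = C(ε, C₀) such that the following holds. Let a : ℕ → ℝ satisfy |a(n)| ≤ C₀ n^{1/4+ε} for all n ≥ 1 and ∑_{1 ≤ n ≤ X} a(n)² ≤ C₀ X (1 + log X) for all real X ≥ 1. Let p be a prime, let d ∈ {1, p}, let M, N be real numbers with M ≥ 1 and N ≥ 20M, and let V₁, V₂ : ℝ → ℝ vanish outside [1,2] and satisfy |V₁(x)| ≤ 1 and |V₂(x)| ≤ 1 for all x. Then | (d/√(MN)) ∑ a(m) a(n) V₁(m/M) V₂(n/N) | ≤ C · M^{1/2+ε} N^{3/4+ε}, where the sum runs over all pairs of positive integers (m, n) with m ≡ n (mod d), m ≠ n, and gcd(mn, p) = 1. -/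
open Finset

lemma count_aux (d K m : ℕ) :
    ((Finset.Icc 1 K).filter (fun n : ℕ => (d:ℤ) ∣ (m:ℤ) - (n:ℤ))).card ≤ K / d + 1 := by
  classical
  have hmod : ∀ n ∈ (Finset.Icc 1 K).filter (fun n : ℕ => (d:ℤ) ∣ (m:ℤ) - (n:ℤ)),
      n % d = m % d := by
    intro n hn
    simp only [Finset.mem_filter] at hn
    have h1 : (n:ℤ) % d = (m:ℤ) % d := Int.modEq_iff_dvd.mpr hn.2
    have h2 : ((n % d : ℕ) : ℤ) = ((m % d : ℕ) : ℤ) := by push_cast; exact h1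
    exact_mod_cast h2
  have h1 : ((Finset.Icc 1 K).filter (fun n : ℕ => (d:ℤ) ∣ (m:ℤ) - (n:ℤ))).card
      ≤ (Finset.range (K / d + 1)).card := by
    apply Finset.card_le_card_of_injOn (fun n => n / d)
    · intro n hn
      have hn' := hn
      simp only [Finset.mem_coe, Finset.mem_filter, Finset.mem_Icc] at hn'
      simp only [Finset.mem_coe, Finset.mem_range]
      exact Nat.lt_succ_of_le (Nat.div_le_div_right hn'.1.2)
    · intro n hn n' hn' hq
      simp only at hq
      calc n = d * (n / d) + n % d := (Nat.div_add_mod n d).symm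
        _ = d * (n' / d) + n' % d := by
            rw [hq, hmod n (Finset.mem_coe.mp hn), hmod n' (Finset.mem_coe.mp hn')]
        _ = n' := Nat.div_add_mod n' d
  simpa using h1

lemma log_aux (ε X : ℝ) (hε : 0 < ε) (hX : 1 ≤ X) :
    1 + Real.log X ≤ (1 + 1/(2*ε)) * X ^ (2*ε) := by
  have hX0 : 0 < X := by linarith
  have h1 : Real.log (X ^ (2*ε)) = (2*ε) * Real.log X := Real.log_rpow hX0 _
  have h2 : Real.log (X ^ (2*ε)) ≤ X ^ (2*ε) - 1 :=
    le_trans (Real.log_le_sub_one_of_pos (Real.rpow_pos_of_pos hX0 _)) le_rfl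
  have h3 : (1:ℝ) ≤ X ^ (2*ε) := Real.one_le_rpow hX (by linarith)
  have hlog : 0 ≤ Real.log X := Real.log_nonneg hX
  rw [h1] at h2
  have h4 : Real.log X ≤ (X ^ (2*ε) - 1)/(2*ε) := by
    rw [le_div_iff₀ (by linarith : (0:ℝ) < 2*ε)]; linarith
  have h5 : (X ^ (2*ε) - 1)/(2*ε) ≤ X ^ (2*ε)/(2*ε) := by gcongr; linarith
  have h6 : 1 + X ^ (2*ε)/(2*ε) ≤ (1 + 1/(2*ε)) * X ^ (2*ε) := by
    have : (1 + 1/(2*ε)) * X ^ (2*ε) = X ^ (2*ε) + X ^ (2*ε)/(2*ε) := by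
      field_simp
    linarith
  linarith

set_option maxHeartbeats 2000000 in
/-- Lemma "ramsub": for a real sequence satisfying Iwaniec's pointwise bound and the
Rankin–Selberg mean-square bound, the sum `𝒮_{N,M,p,d}` is `≤ C M^{1/2+ε} N^{3/4+ε}`. -/
theorem stmt2 (ε C₀ : ℝ) (hε : 0 < ε) (hε' : ε ≤ 1/4) (hC₀ : 1 ≤ C₀) :
    ∃ C : ℝ, 0 < C ∧
    ∀ a : ℕ → ℝ,
      (∀ n : ℕ, 1 ≤ n → |a n| ≤ C₀ * (n : ℝ) ^ ((1 : ℝ)/4 + ε)) →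
      (∀ X : ℝ, 1 ≤ X → ∑ n ∈ Finset.Icc 1 ⌊X⌋₊, (a n)^2 ≤ C₀ * X * (1 + Real.log X)) →
      ∀ p : ℕ, p.Prime → ∀ d : ℕ, (d = 1 ∨ d = p) →
      ∀ M N : ℝ, 1 ≤ M → 20 * M ≤ N →
      ∀ V₁ V₂ : ℝ → ℝ,
        (∀ x : ℝ, x ∉ Set.Icc (1 : ℝ) 2 → V₁ x = 0) → (∀ x : ℝ, |V₁ x| ≤ 1) →
        (∀ x : ℝ, x ∉ Set.Icc (1 : ℝ) 2 → V₂ x = 0) → (∀ x : ℝ, |V₂ x| ≤ 1) →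
        |((d : ℝ) / Real.sqrt (M * N)) * ∑' mn : ℕ × ℕ,
            (if 1 ≤ mn.1 ∧ 1 ≤ mn.2 ∧ (d : ℤ) ∣ ((mn.1 : ℤ) - (mn.2 : ℤ)) ∧ mn.1 ≠ mn.2
                ∧ Nat.Coprime (mn.1 * mn.2) p
             then a mn.1 * a mn.2 * V₁ ((mn.1 : ℝ) / M) * V₂ ((mn.2 : ℝ) / N) else 0)|
        ≤ C * M ^ ((1 : ℝ)/2 + ε) * N ^ ((3 : ℝ)/4 + ε) := by
  classical
  obtain ⟨cε, hcεdef⟩ : ∃ c : ℝ, c = 1 + 1/(2*ε) := ⟨_, rfl⟩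
  have hcε1 : 1 ≤ cε := by
    have : 0 < 1/(2*ε) := by positivity
    rw [hcεdef]; linarith
  refine ⟨24 * C₀^2 * cε, by nlinarith, ?_⟩
  intro a ha hRS p hp d hd M N hM hMN V₁ V₂ hV₁0 hV₁ hV₂0 hV₂
  have hd1 : 1 ≤ d := by
    rcases hd with h | h <;> subst h
    · exact le_rfl
    · exact hp.pos
  have hM0 : (0:ℝ) < M := by linarith
  have hN : (20:ℝ) ≤ N := by linarith
  have hN0 : (0:ℝ) < N := by linarith
  set K1 : ℕ := ⌊2*M⌋₊ with hK1def
  set K2 : ℕ := ⌊2*N⌋₊ with hK2def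
  have hK1 : (K1:ℝ) ≤ 2*M := Nat.floor_le (by positivity)
  have hK2 : (K2:ℝ) ≤ 2*N := Nat.floor_le (by positivity)
  have hK12 : K1 ≤ K2 := Nat.floor_le_floor (by linarith)
  set S : Finset (ℕ × ℕ) := Finset.Icc 1 K1 ×ˢ Finset.Icc 1 K2 with hSdef
  -- support
  have key : ∀ mn : ℕ × ℕ, mn ∉ S →
      (if 1 ≤ mn.1 ∧ 1 ≤ mn.2 ∧ (d : ℤ) ∣ ((mn.1 : ℤ) - (mn.2 : ℤ)) ∧ mn.1 ≠ mn.2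
          ∧ Nat.Coprime (mn.1 * mn.2) p
       then a mn.1 * a mn.2 * V₁ ((mn.1 : ℝ) / M) * V₂ ((mn.2 : ℝ) / N) else 0) = 0 := by
    rintro ⟨m, n⟩ hmn
    split_ifs with hc
    · obtain ⟨hm1, hn1, -, -, -⟩ := hc
      have hnotboth : m ∉ Finset.Icc 1 K1 ∨ n ∉ Finset.Icc 1 K2 := by
        by_contra h
        push_neg at h
        exact hmn (Finset.mem_product.mpr ⟨h.1, h.2⟩)
      rcases hnotboth with h | h
      · have hgt : ¬ ((m:ℝ) ≤ 2*M) := by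
          intro hle
          exact h (Finset.mem_Icc.mpr ⟨hm1, Nat.le_floor (by exact_mod_cast hle)⟩)
        push_neg at hgt
        have : V₁ ((m:ℝ)/M) = 0 := by
          apply hV₁0
          intro hmem
          rw [Set.mem_Icc] at hmem
          have := hmem.2
          rw [div_le_iff₀ hM0] at this
          linarith
        rw [this]; ring
      · have hgt : ¬ ((n:ℝ) ≤ 2*N) := by
          intro hle
          exact h (Finset.mem_Icc.mpr ⟨hn1, Nat.le_floor (by exact_mod_cast hle)⟩)
        push_neg at hgt
        have : V₂ ((n:ℝ)/N) = 0 := by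
          apply hV₂0
          intro hmem
          rw [Set.mem_Icc] at hmem
          have := hmem.2
          rw [div_le_iff₀ hN0] at this
          linarith
        rw [this]; ring
    · rfl
  have htsum := tsum_eq_sum (L := SummationFilter.unconditional (ℕ × ℕ)) key
  rw [htsum, abs_mul, abs_of_nonneg (by positivity : (0:ℝ) ≤ (d:ℝ)/Real.sqrt (M*N))]
  -- pointwise bound inside S
  have h1 : |∑ mn ∈ S,
      (if 1 ≤ mn.1 ∧ 1 ≤ mn.2 ∧ (d : ℤ) ∣ ((mn.1 : ℤ) - (mn.2 : ℤ)) ∧ mn.1 ≠ mn.2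
          ∧ Nat.Coprime (mn.1 * mn.2) p
       then a mn.1 * a mn.2 * V₁ ((mn.1 : ℝ) / M) * V₂ ((mn.2 : ℝ) / N) else 0)|
      ≤ ∑ mn ∈ S, (if ((d:ℤ) ∣ ((mn.1:ℤ) - (mn.2:ℤ))) ∧ mn.2 ≠ mn.1
          then |a mn.1| * |a mn.2| else 0) := by
    refine (Finset.abs_sum_le_sum_abs _ _).trans (Finset.sum_le_sum ?_)
    rintro ⟨m, n⟩ -
    by_cases hc : 1 ≤ m ∧ 1 ≤ n ∧ (d : ℤ) ∣ ((m : ℤ) - (n : ℤ)) ∧ m ≠ n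
        ∧ Nat.Coprime (m * n) p
    · rw [if_pos hc, if_pos ⟨hc.2.2.1, (hc.2.2.2.1).symm⟩]
      calc |a m * a n * V₁ ((m:ℝ)/M) * V₂ ((n:ℝ)/N)|
          = |a m| * |a n| * |V₁ ((m:ℝ)/M)| * |V₂ ((n:ℝ)/N)| := by
            rw [abs_mul, abs_mul, abs_mul]
        _ ≤ |a m| * |a n| * 1 * 1 := by
            gcongr
            · exact hV₁ _
            · exact hV₂ _
        _ = |a m| * |a n| := by ring
    · rw [if_neg hc]
      simp only [abs_zero]
      positivity
  -- rewrite RHS as iterated sum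
  have h2 : ∑ mn ∈ S, (if ((d:ℤ) ∣ ((mn.1:ℤ) - (mn.2:ℤ))) ∧ mn.2 ≠ mn.1
          then |a mn.1| * |a mn.2| else 0)
      = ∑ m ∈ Finset.Icc 1 K1, |a m| *
          ∑ n ∈ (Finset.Icc 1 K2).filter
            (fun n : ℕ => ((d:ℤ) ∣ ((m:ℤ) - (n:ℤ))) ∧ n ≠ m), |a n| := by
    rw [hSdef, Finset.sum_product]
    refine Finset.sum_congr rfl fun m _ => ?_
    rw [Finset.sum_filter, Finset.mul_sum]
    refine Finset.sum_congr rfl fun n _ => ?_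
    split_ifs <;> ring
  -- bound on |a n| for n ≤ K2
  have hA : ∀ n ∈ Finset.Icc 1 K2, |a n| ≤ 2 * C₀ * N ^ ((1:ℝ)/4 + ε) := by
    intro n hn
    simp only [Finset.mem_Icc] at hn
    have hnN : (n:ℝ) ≤ 2*N := le_trans (Nat.cast_le.mpr hn.2) hK2
    have e1 : ((2:ℝ)*N) ^ ((1:ℝ)/4 + ε) = 2 ^ ((1:ℝ)/4 + ε) * N ^ ((1:ℝ)/4 + ε) :=
      Real.mul_rpow (by norm_num) hN0.le
    have e2 : (2:ℝ) ^ ((1:ℝ)/4 + ε) ≤ 2 := by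
      calc (2:ℝ) ^ ((1:ℝ)/4 + ε) ≤ 2 ^ (1:ℝ) :=
            Real.rpow_le_rpow_of_exponent_le (by norm_num) (by linarith)
        _ = 2 := Real.rpow_one 2
    calc |a n| ≤ C₀ * (n:ℝ) ^ ((1:ℝ)/4 + ε) := ha n hn.1
      _ ≤ C₀ * ((2:ℝ)*N) ^ ((1:ℝ)/4 + ε) := by
          gcongr <;> first | positivity | linarith
      _ = C₀ * (2 ^ ((1:ℝ)/4 + ε) * N ^ ((1:ℝ)/4 + ε)) := by rw [e1]
      _ ≤ C₀ * (2 * N ^ ((1:ℝ)/4 + ε)) := by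
          gcongr
      _ = 2 * C₀ * N ^ ((1:ℝ)/4 + ε) := by ring
  -- inner sum bound
  have hinner : ∀ m ∈ Finset.Icc 1 K1,
      (d:ℝ) * ∑ n ∈ (Finset.Icc 1 K2).filter
          (fun n : ℕ => ((d:ℤ) ∣ ((m:ℤ) - (n:ℤ))) ∧ n ≠ m), |a n|
      ≤ 8 * C₀ * N ^ ((1:ℝ)/4 + ε) * N := by
    intro m hm
    set F := (Finset.Icc 1 K2).filter
        (fun n : ℕ => ((d:ℤ) ∣ ((m:ℤ) - (n:ℤ))) ∧ n ≠ m) with hFdef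
    rcases F.eq_empty_or_nonempty with hE | hE
    · rw [hE]
      simp only [Finset.sum_empty, mul_zero]
      positivity
    · obtain ⟨n₀, hn₀⟩ := hE
      simp only [hFdef, Finset.mem_filter, Finset.mem_Icc] at hn₀
      have hm2 : m ≤ K2 := le_trans (Finset.mem_Icc.mp hm).2 hK12
      have hne : n₀ ≠ m := hn₀.2.2
      have hnK : n₀ ≤ K2 := hn₀.1.2
      have hdK : d ≤ K2 := by
        have hdv : d ∣ ((m:ℤ) - (n₀:ℤ)).natAbs := by
          rw [← Int.natAbs_natCast d]
          exact Int.natAbs_dvd_natAbs.mpr hn₀.2.1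
        have h2' := Nat.le_of_dvd (by omega) hdv
        omega
      have hcard : F.card ≤ K2 / d + 1 := by
        refine le_trans (Finset.card_le_card ?_) (count_aux d K2 m)
        intro n hn
        simp only [hFdef, Finset.mem_filter] at hn ⊢
        exact ⟨hn.1, hn.2.1⟩
      have hsum : ∑ n ∈ F, |a n| ≤ (F.card : ℝ) * (2 * C₀ * N ^ ((1:ℝ)/4 + ε)) := by
        have := Finset.sum_le_card_nsmul F (fun n => |a n|) (2 * C₀ * N ^ ((1:ℝ)/4 + ε))
          (fun n hn => hA n (Finset.filter_subset _ _ hn))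
        simpa [nsmul_eq_mul] using this
      have hdcard : (d:ℝ) * (F.card : ℝ) ≤ 4 * N := by
        have hnat : d * F.card ≤ K2 + d := by
          calc d * F.card ≤ d * (K2 / d + 1) := Nat.mul_le_mul_left d hcard
            _ = K2 / d * d + d := by ring
            _ ≤ K2 + d := by
                have := Nat.div_mul_le_self K2 d
                omega
        have h1' : (d:ℝ) * (F.card : ℝ) ≤ (K2:ℝ) + (d:ℝ) := by exact_mod_cast hnat
        have h2' : (d:ℝ) ≤ (K2:ℝ) := Nat.cast_le.mpr hdK
        linarith
      calc (d:ℝ) * ∑ n ∈ F, |a n|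
          ≤ (d:ℝ) * ((F.card : ℝ) * (2 * C₀ * N ^ ((1:ℝ)/4 + ε))) := by
            apply mul_le_mul_of_nonneg_left hsum (Nat.cast_nonneg d)
        _ = ((d:ℝ) * (F.card : ℝ)) * (2 * C₀ * N ^ ((1:ℝ)/4 + ε)) := by ring
        _ ≤ (4 * N) * (2 * C₀ * N ^ ((1:ℝ)/4 + ε)) :=
            mul_le_mul_of_nonneg_right hdcard (by positivity)
        _ = 8 * C₀ * N ^ ((1:ℝ)/4 + ε) * N := by ring
  -- outer sum bound
  have houter : ∑ m ∈ Finset.Icc 1 K1, |a m| ≤ 3 * C₀ * cε * M ^ ((1:ℝ) + ε) := by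
    have hMe : (0:ℝ) < M ^ ε := Real.rpow_pos_of_pos hM0 _
    have step1 : ∀ m ∈ Finset.Icc 1 K1, |a m| ≤ M ^ ε / 2 + (a m)^2 * (2 * M ^ ε)⁻¹ := by
      intro m _
      have hq : (a m)^2 * (2 * M ^ ε)⁻¹ = (a m)^2 / (2 * M ^ ε) := by ring
      rw [hq]
      have hexp : (a m)^2 / (2 * M ^ ε) * (2 * M ^ ε) = (a m)^2 := by
        field_simp
      nlinarith [sq_nonneg (M ^ ε - |a m|), sq_abs (a m), hexp, hMe,
        div_nonneg (sq_nonneg (a m)) (by positivity : (0:ℝ) ≤ 2 * M ^ ε)]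
    have hsum2 : ∑ m ∈ Finset.Icc 1 K1, (a m)^2 ≤ 4 * C₀ * cε * (M * (M ^ ε * M ^ ε)) := by
      have hbase := hRS (2*M) (by linarith)
      have hlog2 : 1 + Real.log (2*M) ≤ cε * ((2:ℝ)*M) ^ (2*ε) := by
        rw [hcεdef]; exact log_aux ε (2*M) hε (by linarith)
      have he1 : ((2:ℝ)*M) ^ (2*ε) ≤ 2 * (M ^ ε * M ^ ε) := by
        have e1 : ((2:ℝ)*M) ^ (2*ε) = 2 ^ (2*ε) * M ^ (2*ε) :=
          Real.mul_rpow (by norm_num) hM0.le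
        have e2 : (2:ℝ) ^ (2*ε) ≤ 2 := by
          calc (2:ℝ) ^ (2*ε) ≤ 2 ^ (1:ℝ) :=
              Real.rpow_le_rpow_of_exponent_le (by norm_num) (by linarith)
            _ = 2 := Real.rpow_one 2
        have e3 : M ^ (2*ε) = M ^ ε * M ^ ε := by
          rw [← Real.rpow_add hM0]; ring_nf
        rw [e1, e3]
        have : (0:ℝ) ≤ M ^ ε * M ^ ε := by positivity
        nlinarith
      have hM2ε : (0:ℝ) < M ^ (2*ε) := Real.rpow_pos_of_pos hM0 _
      have hlogpos : 0 ≤ 1 + Real.log (2*M) := by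
        have := Real.log_nonneg (by linarith : (1:ℝ) ≤ 2*M)
        linarith
      calc ∑ m ∈ Finset.Icc 1 K1, (a m)^2 ≤ C₀ * (2*M) * (1 + Real.log (2*M)) := hbase
        _ ≤ C₀ * (2*M) * (cε * ((2:ℝ)*M) ^ (2*ε)) := by
            apply mul_le_mul_of_nonneg_left hlog2 (by positivity)
        _ ≤ C₀ * (2*M) * (cε * (2 * (M ^ ε * M ^ ε))) := by
            gcongr
        _ = 4 * C₀ * cε * (M * (M ^ ε * M ^ ε)) := by ring
    have hcount : ((Finset.Icc 1 K1).card : ℝ) ≤ 2 * M := by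
      rw [Nat.card_Icc]
      simp only [Nat.add_sub_cancel]
      exact hK1
    have hMeM : M * M ^ ε = M ^ ((1:ℝ) + ε) := by
      rw [Real.rpow_add hM0, Real.rpow_one]
    calc ∑ m ∈ Finset.Icc 1 K1, |a m|
        ≤ ∑ m ∈ Finset.Icc 1 K1, (M ^ ε / 2 + (a m)^2 * (2 * M ^ ε)⁻¹) :=
          Finset.sum_le_sum step1
      _ = ((Finset.Icc 1 K1).card : ℝ) * (M ^ ε / 2)
          + (∑ m ∈ Finset.Icc 1 K1, (a m)^2) * (2 * M ^ ε)⁻¹ := by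
          rw [Finset.sum_add_distrib, Finset.sum_const, Finset.sum_mul, nsmul_eq_mul]
      _ ≤ 3 * C₀ * cε * M ^ ((1:ℝ) + ε) := by
          have hterm2 : (∑ m ∈ Finset.Icc 1 K1, (a m)^2) * (2 * M ^ ε)⁻¹
              ≤ 2 * C₀ * cε * (M * M ^ ε) := by
            rw [← div_eq_mul_inv, div_le_iff₀ (by positivity : (0:ℝ) < 2 * M ^ ε)]
            nlinarith [hsum2]
          have hterm1 : ((Finset.Icc 1 K1).card : ℝ) * (M ^ ε / 2) ≤ M * M ^ ε := by
            nlinarith [hcount, hMe, (by positivity : (0:ℝ) ≤ ((Finset.Icc 1 K1).card : ℝ))]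
          have hbig : (1:ℝ) ≤ C₀ * cε := by nlinarith
          have hMM : (0:ℝ) < M * M ^ ε := by positivity
          rw [← hMeM]
          nlinarith [mul_le_mul_of_nonneg_right hbig (le_of_lt hMM)]
  -- combine
  have h3 : (d:ℝ) * ∑ m ∈ Finset.Icc 1 K1, (|a m| *
      ∑ n ∈ (Finset.Icc 1 K2).filter
          (fun n : ℕ => ((d:ℤ) ∣ ((m:ℤ) - (n:ℤ))) ∧ n ≠ m), |a n|)
      ≤ (3 * C₀ * cε * M ^ ((1:ℝ) + ε)) * (8 * C₀ * N ^ ((1:ℝ)/4 + ε) * N) := by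
    rw [Finset.mul_sum]
    calc ∑ m ∈ Finset.Icc 1 K1, (d:ℝ) * (|a m| *
          ∑ n ∈ (Finset.Icc 1 K2).filter
              (fun n : ℕ => ((d:ℤ) ∣ ((m:ℤ) - (n:ℤ))) ∧ n ≠ m), |a n|)
        = ∑ m ∈ Finset.Icc 1 K1, |a m| * ((d:ℝ) *
          ∑ n ∈ (Finset.Icc 1 K2).filter
              (fun n : ℕ => ((d:ℤ) ∣ ((m:ℤ) - (n:ℤ))) ∧ n ≠ m), |a n|) := by
          refine Finset.sum_congr rfl fun m _ => ?_; ring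
      _ ≤ ∑ m ∈ Finset.Icc 1 K1, |a m| * (8 * C₀ * N ^ ((1:ℝ)/4 + ε) * N) :=
          Finset.sum_le_sum fun m hm =>
            mul_le_mul_of_nonneg_left (hinner m hm) (abs_nonneg _)
      _ = (∑ m ∈ Finset.Icc 1 K1, |a m|) * (8 * C₀ * N ^ ((1:ℝ)/4 + ε) * N) :=
          (Finset.sum_mul _ _ _).symm
      _ ≤ (3 * C₀ * cε * M ^ ((1:ℝ) + ε)) * (8 * C₀ * N ^ ((1:ℝ)/4 + ε) * N) :=
          mul_le_mul_of_nonneg_right houter (by positivity)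
  set Z : ℝ := ∑ m ∈ Finset.Icc 1 K1, (|a m| *
      ∑ n ∈ (Finset.Icc 1 K2).filter
          (fun n : ℕ => ((d:ℤ) ∣ ((m:ℤ) - (n:ℤ))) ∧ n ≠ m), |a n|) with hZdef
  -- final algebra
  have f1 : M ^ ((1:ℝ) + ε) = M ^ ((1:ℝ)/2) * M ^ ((1:ℝ)/2 + ε) := by
    rw [← Real.rpow_add hM0]; congr 1; ring
  have f2 : N ^ ((1:ℝ)/4 + ε) * N = N ^ ((1:ℝ)/2) * N ^ ((3:ℝ)/4 + ε) := by
    have e3a : N ^ (((1:ℝ)/4 + ε) + 1) = N ^ ((1:ℝ)/4 + ε) * N := by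
      rw [Real.rpow_add hN0, Real.rpow_one]
    have e3b : N ^ ((1:ℝ)/2 + ((3:ℝ)/4 + ε)) = N ^ ((1:ℝ)/2) * N ^ ((3:ℝ)/4 + ε) :=
      Real.rpow_add hN0 _ _
    have e3c : ((1:ℝ)/4 + ε) + 1 = (1:ℝ)/2 + ((3:ℝ)/4 + ε) := by ring
    rw [← e3a, e3c, e3b]
  have f3 : Real.sqrt (M*N) = M ^ ((1:ℝ)/2) * N ^ ((1:ℝ)/2) := by
    rw [Real.sqrt_eq_rpow, Real.mul_rpow hM0.le hN0.le]
  have hx1 : (0:ℝ) < M ^ ((1:ℝ)/2) := Real.rpow_pos_of_pos hM0 _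
  have hy1 : (0:ℝ) < N ^ ((1:ℝ)/2) := Real.rpow_pos_of_pos hN0 _
  refine le_trans (mul_le_mul_of_nonneg_left (h1.trans (le_of_eq h2)) (by positivity)) ?_
  have hre : (d:ℝ) / Real.sqrt (M*N) * Z = (1 / Real.sqrt (M*N)) * ((d:ℝ) * Z) := by
    ring
  rw [hre]
  refine le_trans (mul_le_mul_of_nonneg_left h3 (by positivity)) (le_of_eq ?_)
  rw [f3, f1]
  have e4 : (3 * C₀ * cε * (M ^ ((1:ℝ)/2) * M ^ ((1:ℝ)/2 + ε))) *
      (8 * C₀ * N ^ ((1:ℝ)/4 + ε) * N)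
      = 24 * C₀^2 * cε * (M ^ ((1:ℝ)/2) * M ^ ((1:ℝ)/2 + ε)) *
        (N ^ ((1:ℝ)/4 + ε) * N) := by ring
  rw [e4, f2]
  field_simp
end

section
/- Let 0 < ε ≤ 1/4 and C₀ ≥ 1. There is a constant C = C(ε, C₀) such that the following holds. Let a : ℕ → ℝ satisfy |a(n)| ≤ C₀ n^{1/4+ε} for all n ≥ 1. Let p be a prime, let d ∈ {1, p}, let M, N be real numbers with 1 ≤ M ≤ N and MN ≤ p^{2+ε}, and let V₁, V₂ : ℝ → ℝ vanish outside [1,2] with |V₁|, |V₂| ≤ 1. Then | (d/√(MN)) ∑_{m ≡ n (mod d), m ≠ n, gcd(mn,p)=1} a(m) a(n) V₁(m/M) V₂(n/N) − (d/√(MN)) ∑_{m ≡ n (mod d), m ≠ n} a(m) a(n) V₁(m/M) V₂(n/N) | ≤ C p^{1/2+4ε}, where both sums run over pairs of positive integers (m, n) with the indicated conditions. -/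
open Finset

set_option maxHeartbeats 2000000 in
/-- Lemma "trivlem": removal of the coprimality condition `gcd(mn, p) = 1` at the cost
of an error `O(p^{1/2+ε})`, for sequences satisfying Iwaniec's pointwise bound. -/
theorem stmt3 (ε C₀ : ℝ) (hε : 0 < ε) (hε' : ε ≤ 1/4) (hC₀ : 1 ≤ C₀) :
    ∃ C : ℝ, 0 < C ∧
    ∀ a : ℕ → ℝ,
      (∀ n : ℕ, 1 ≤ n → |a n| ≤ C₀ * (n : ℝ) ^ ((1 : ℝ)/4 + ε)) →
      ∀ p : ℕ, p.Prime → ∀ d : ℕ, (d = 1 ∨ d = p) →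
      ∀ M N : ℝ, 1 ≤ M → M ≤ N → M * N ≤ (p : ℝ) ^ ((2 : ℝ) + ε) →
      ∀ V₁ V₂ : ℝ → ℝ,
        (∀ x : ℝ, x ∉ Set.Icc (1 : ℝ) 2 → V₁ x = 0) → (∀ x : ℝ, |V₁ x| ≤ 1) →
        (∀ x : ℝ, x ∉ Set.Icc (1 : ℝ) 2 → V₂ x = 0) → (∀ x : ℝ, |V₂ x| ≤ 1) →
        |((d : ℝ) / Real.sqrt (M * N)) * (∑' mn : ℕ × ℕ,
            (if 1 ≤ mn.1 ∧ 1 ≤ mn.2 ∧ (d : ℤ) ∣ ((mn.1 : ℤ) - (mn.2 : ℤ)) ∧ mn.1 ≠ mn.2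
                ∧ Nat.Coprime (mn.1 * mn.2) p
             then a mn.1 * a mn.2 * V₁ ((mn.1 : ℝ) / M) * V₂ ((mn.2 : ℝ) / N) else 0))
          - ((d : ℝ) / Real.sqrt (M * N)) * (∑' mn : ℕ × ℕ,
            (if 1 ≤ mn.1 ∧ 1 ≤ mn.2 ∧ (d : ℤ) ∣ ((mn.1 : ℤ) - (mn.2 : ℤ)) ∧ mn.1 ≠ mn.2
             then a mn.1 * a mn.2 * V₁ ((mn.1 : ℝ) / M) * V₂ ((mn.2 : ℝ) / N) else 0))|
        ≤ C * (p : ℝ) ^ ((1 : ℝ)/2 + 4 * ε) := by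
  classical
  refine ⟨16 * C₀ ^ 2, by positivity, ?_⟩
  intro a ha p hp d hd M N hM hMN hMNp V₁ V₂ hV₁0 hV₁b hV₂0 hV₂b
  have hι : (0:ℝ) < 1/4 + ε := by linarith
  have hM0 : (0:ℝ) < M := by linarith
  have hN1 : (1:ℝ) ≤ N := hM.trans hMN
  have hN0 : (0:ℝ) < N := by linarith
  have hMN0 : (0:ℝ) < M * N := by positivity
  have hp0 : (0:ℝ) < p := by exact_mod_cast hp.pos
  have hp1 : (1:ℝ) ≤ p := by exact_mod_cast hp.one_lt.le
  set K₁ := ⌊2*M⌋₊ with hK₁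
  set K₂ := ⌊2*N⌋₊ with hK₂
  have hK₁le : (K₁:ℝ) ≤ 2*M := Nat.floor_le (by positivity)
  have hK₂le : (K₂:ℝ) ≤ 2*N := Nat.floor_le (by positivity)
  set S : Finset (ℕ × ℕ) := Finset.Ioc 0 K₁ ×ˢ Finset.Ioc 0 K₂ with hS
  set B := 2 * C₀^2 * (M*N) ^ ((1:ℝ)/4 + ε) with hBdef
  have hB0 : 0 < B := by positivity
  -- the summands vanish outside S
  have hvan : ∀ mn : ℕ × ℕ, mn ∉ S → 1 ≤ mn.1 → 1 ≤ mn.2 →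
      a mn.1 * a mn.2 * V₁ ((mn.1 : ℝ) / M) * V₂ ((mn.2 : ℝ) / N) = 0 := by
    rintro ⟨m, n⟩ hmn h1 h2
    have hor : K₁ < m ∨ K₂ < n := by
      by_contra hcon
      push_neg at hcon
      exact hmn (Finset.mem_product.2 ⟨Finset.mem_Ioc.2 ⟨h1, hcon.1⟩,
        Finset.mem_Ioc.2 ⟨h2, hcon.2⟩⟩)
    rcases hor with h | h
    · have hlt : 2*M < (m:ℝ) := (Nat.floor_lt (by positivity)).1 h
      have hV : V₁ ((m:ℝ)/M) = 0 := by
        refine hV₁0 _ ?_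
        simp only [Set.mem_Icc, not_and, not_le]
        intro _
        rw [lt_div_iff₀ hM0]
        linarith
      simp [hV]
    · have hlt : 2*N < (n:ℝ) := (Nat.floor_lt (by positivity)).1 h
      have hV : V₂ ((n:ℝ)/N) = 0 := by
        refine hV₂0 _ ?_
        simp only [Set.mem_Icc, not_and, not_le]
        intro _
        rw [lt_div_iff₀ hN0]
        linarith
      simp [hV]
  have e₁ : (∑' mn : ℕ × ℕ,
      (if 1 ≤ mn.1 ∧ 1 ≤ mn.2 ∧ (d : ℤ) ∣ ((mn.1 : ℤ) - (mn.2 : ℤ)) ∧ mn.1 ≠ mn.2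
          ∧ Nat.Coprime (mn.1 * mn.2) p
       then a mn.1 * a mn.2 * V₁ ((mn.1 : ℝ) / M) * V₂ ((mn.2 : ℝ) / N) else 0)) =
      ∑ mn ∈ S,
      (if 1 ≤ mn.1 ∧ 1 ≤ mn.2 ∧ (d : ℤ) ∣ ((mn.1 : ℤ) - (mn.2 : ℤ)) ∧ mn.1 ≠ mn.2
          ∧ Nat.Coprime (mn.1 * mn.2) p
       then a mn.1 * a mn.2 * V₁ ((mn.1 : ℝ) / M) * V₂ ((mn.2 : ℝ) / N) else 0) := by
    refine tsum_eq_sum ?_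
    intro mn hmn
    split_ifs with h
    · exact hvan mn hmn h.1 h.2.1
    · rfl
  have e₂ : (∑' mn : ℕ × ℕ,
      (if 1 ≤ mn.1 ∧ 1 ≤ mn.2 ∧ (d : ℤ) ∣ ((mn.1 : ℤ) - (mn.2 : ℤ)) ∧ mn.1 ≠ mn.2
       then a mn.1 * a mn.2 * V₁ ((mn.1 : ℝ) / M) * V₂ ((mn.2 : ℝ) / N) else 0)) =
      ∑ mn ∈ S,
      (if 1 ≤ mn.1 ∧ 1 ≤ mn.2 ∧ (d : ℤ) ∣ ((mn.1 : ℤ) - (mn.2 : ℤ)) ∧ mn.1 ≠ mn.2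
       then a mn.1 * a mn.2 * V₁ ((mn.1 : ℝ) / M) * V₂ ((mn.2 : ℝ) / N) else 0) := by
    refine tsum_eq_sum ?_
    intro mn hmn
    split_ifs with h
    · exact hvan mn hmn h.1 h.2.1
    · rfl
  rw [e₁, e₂, ← mul_sub, abs_mul]
  have hdR0 : 0 ≤ (d:ℝ) / Real.sqrt (M*N) := by positivity
  rw [abs_of_nonneg hdR0]
  -- the size bound for terms in S
  have htb : ∀ mn ∈ S, |a mn.1 * a mn.2 * V₁ ((mn.1 : ℝ) / M) * V₂ ((mn.2 : ℝ) / N)| ≤ B := by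
    rintro ⟨m, n⟩ hmn
    simp only [hS, Finset.mem_product, Finset.mem_Ioc] at hmn
    obtain ⟨⟨hm0, hm1⟩, hn0, hn1⟩ := hmn
    have hmR : (m:ℝ) ≤ 2*M := le_trans (by exact_mod_cast hm1) hK₁le
    have hnR : (n:ℝ) ≤ 2*N := le_trans (by exact_mod_cast hn1) hK₂le
    have ham : |a m| ≤ C₀ * (2*M) ^ ((1:ℝ)/4 + ε) := by
      refine (ha m hm0).trans ?_
      gcongr
    have han : |a n| ≤ C₀ * (2*N) ^ ((1:ℝ)/4 + ε) := by
      refine (ha n hn0).trans ?_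
      gcongr
    calc |a m * a n * V₁ ((m:ℝ)/M) * V₂ ((n:ℝ)/N)|
        = |a m| * |a n| * |V₁ ((m:ℝ)/M)| * |V₂ ((n:ℝ)/N)| := by
          rw [abs_mul, abs_mul, abs_mul]
      _ ≤ (C₀ * (2*M) ^ ((1:ℝ)/4 + ε)) * (C₀ * (2*N) ^ ((1:ℝ)/4 + ε)) * 1 * 1 := by
          gcongr
          · exact hV₁b _
          · exact hV₂b _
      _ = C₀^2 * ((2*M) * (2*N)) ^ ((1:ℝ)/4 + ε) := by
          rw [Real.mul_rpow (x := 2*M) (y := 2*N) (by positivity) (by positivity)]; ring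
      _ ≤ B := by
          rw [show (2*M) * (2*N) = 4*(M*N) by ring,
            Real.mul_rpow (x := 4) (y := M*N) (by norm_num) (by positivity)]
          have h4 : (4:ℝ) ^ ((1:ℝ)/4 + ε) ≤ 2 := by
            have h1 : (4:ℝ) ^ ((1:ℝ)/4 + ε) ≤ (4:ℝ) ^ ((1:ℝ)/2) :=
              Real.rpow_le_rpow_of_exponent_le (by norm_num) (by linarith)
            have h2 : (4:ℝ) ^ ((1:ℝ)/2) = 2 := by
              rw [show (4:ℝ) = 2^(2:ℕ) by norm_num, ← Real.rpow_natCast 2 2,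
                ← Real.rpow_mul (by norm_num)]
              norm_num
            linarith
          calc C₀^2 * ((4:ℝ) ^ ((1:ℝ)/4 + ε) * (M*N) ^ ((1:ℝ)/4 + ε))
              ≤ C₀^2 * (2 * (M*N) ^ ((1:ℝ)/4 + ε)) := by gcongr
            _ = B := by rw [hBdef]; ring
  -- bad pairs
  set T : Finset (ℕ × ℕ) :=
    S.filter (fun mn => p ∣ mn.1 * mn.2 ∧ (d : ℤ) ∣ ((mn.1 : ℤ) - (mn.2 : ℤ))) with hT
  -- pointwise bound on the difference of summands
  have hptw : ∀ mn ∈ S,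
      |(if 1 ≤ mn.1 ∧ 1 ≤ mn.2 ∧ (d : ℤ) ∣ ((mn.1 : ℤ) - (mn.2 : ℤ)) ∧ mn.1 ≠ mn.2
          ∧ Nat.Coprime (mn.1 * mn.2) p
        then a mn.1 * a mn.2 * V₁ ((mn.1 : ℝ) / M) * V₂ ((mn.2 : ℝ) / N) else 0)
        - (if 1 ≤ mn.1 ∧ 1 ≤ mn.2 ∧ (d : ℤ) ∣ ((mn.1 : ℤ) - (mn.2 : ℤ)) ∧ mn.1 ≠ mn.2
        then a mn.1 * a mn.2 * V₁ ((mn.1 : ℝ) / M) * V₂ ((mn.2 : ℝ) / N) else 0)|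
      ≤ (if p ∣ mn.1 * mn.2 ∧ (d : ℤ) ∣ ((mn.1 : ℤ) - (mn.2 : ℤ)) then B else 0) := by
    intro mn hmn
    by_cases hc : 1 ≤ mn.1 ∧ 1 ≤ mn.2 ∧ (d : ℤ) ∣ ((mn.1 : ℤ) - (mn.2 : ℤ)) ∧ mn.1 ≠ mn.2
    · by_cases hcop : Nat.Coprime (mn.1 * mn.2) p
      · rw [if_pos ⟨hc.1, hc.2.1, hc.2.2.1, hc.2.2.2, hcop⟩, if_pos hc, sub_self, abs_zero]
        split_ifs
        · exact hB0.le
        · exact le_refl 0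
      · have hpd : p ∣ mn.1 * mn.2 := by
          by_contra h
          exact hcop (Nat.coprime_comm.mp (hp.coprime_iff_not_dvd.mpr h))
        rw [if_neg (fun h => hcop h.2.2.2.2), if_pos hc, if_pos ⟨hpd, hc.2.2.1⟩,
          zero_sub, abs_neg]
        exact htb mn hmn
    · rw [if_neg (fun h => hc ⟨h.1, h.2.1, h.2.2.1, h.2.2.2.1⟩), if_neg hc, sub_self, abs_zero]
      split_ifs
      · exact hB0.le
      · exact le_refl 0
  -- the sum of differences is bounded by B * #T
  have hsum : |(∑ mn ∈ S,
      (if 1 ≤ mn.1 ∧ 1 ≤ mn.2 ∧ (d : ℤ) ∣ ((mn.1 : ℤ) - (mn.2 : ℤ)) ∧ mn.1 ≠ mn.2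
          ∧ Nat.Coprime (mn.1 * mn.2) p
       then a mn.1 * a mn.2 * V₁ ((mn.1 : ℝ) / M) * V₂ ((mn.2 : ℝ) / N) else 0))
      - (∑ mn ∈ S,
      (if 1 ≤ mn.1 ∧ 1 ≤ mn.2 ∧ (d : ℤ) ∣ ((mn.1 : ℤ) - (mn.2 : ℤ)) ∧ mn.1 ≠ mn.2
       then a mn.1 * a mn.2 * V₁ ((mn.1 : ℝ) / M) * V₂ ((mn.2 : ℝ) / N) else 0))|
      ≤ B * T.card := by
    rw [← Finset.sum_sub_distrib]
    refine (Finset.abs_sum_le_sum_abs _ _).trans ?_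
    refine (Finset.sum_le_sum hptw).trans ?_
    rw [← Finset.sum_filter, Finset.sum_const, nsmul_eq_mul, ← hT, mul_comm]
  -- counting the bad pairs
  have hTd : (d:ℝ) * T.card ≤ 8 * (M*N) / p := by
    have hcardIoc : ∀ K : ℕ, ((Finset.Ioc 0 K).filter (fun x => p ∣ x)).card = K / p := by
      intro K
      exact Nat.Ioc_filter_dvd_card_eq_div K p
    have hdiv1 : ((K₁ / p : ℕ) : ℝ) ≤ 2*M/p := by
      refine (Nat.cast_div_le).trans ?_
      gcongr
    have hdiv2 : ((K₂ / p : ℕ) : ℝ) ≤ 2*N/p := by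
      refine (Nat.cast_div_le).trans ?_
      gcongr
    have hK₂card : ((Finset.Ioc 0 K₂).card : ℝ) ≤ 2*N := by
      rw [Nat.card_Ioc]; simpa using hK₂le
    have hK₁card : ((Finset.Ioc 0 K₁).card : ℝ) ≤ 2*M := by
      rw [Nat.card_Ioc]; simpa using hK₁le
    rcases hd with hd1 | hdp
    · -- d = 1 : T ⊆ (multiples of p) × all ∪ all × (multiples of p)
      have hsub : T ⊆ ((Finset.Ioc 0 K₁).filter (fun x => p ∣ x) ×ˢ Finset.Ioc 0 K₂)
          ∪ (Finset.Ioc 0 K₁ ×ˢ (Finset.Ioc 0 K₂).filter (fun x => p ∣ x)) := by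
        intro mn hmn
        rw [hT, Finset.mem_filter] at hmn
        obtain ⟨hmnS, hpd, -⟩ := hmn
        rw [hS, Finset.mem_product] at hmnS
        rcases (Nat.Prime.dvd_mul hp).1 hpd with h | h
        · exact Finset.mem_union_left _ (Finset.mem_product.2
            ⟨Finset.mem_filter.2 ⟨hmnS.1, h⟩, hmnS.2⟩)
        · exact Finset.mem_union_right _ (Finset.mem_product.2
            ⟨hmnS.1, Finset.mem_filter.2 ⟨hmnS.2, h⟩⟩)
      have hcard : (T.card : ℝ) ≤ (K₁/p : ℕ) * (Finset.Ioc 0 K₂).card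
          + ((Finset.Ioc 0 K₁).card : ℝ) * (K₂/p : ℕ) := by
        have := (Finset.card_le_card hsub).trans (Finset.card_union_le _ _)
        rw [Finset.card_product, Finset.card_product, hcardIoc, hcardIoc] at this
        exact_mod_cast this
      have : (T.card : ℝ) ≤ (2*M/p) * (2*N) + (2*M) * (2*N/p) := by
        refine hcard.trans ?_
        gcongr <;> positivity
      rw [hd1]
      push_cast
      rw [one_mul]
      refine this.trans_eq ?_
      field_simp
      ring
    · -- d = p : both m and n are multiples of p
      have hsub : T ⊆ ((Finset.Ioc 0 K₁).filter (fun x => p ∣ x) ×ˢ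
          (Finset.Ioc 0 K₂).filter (fun x => p ∣ x)) := by
        intro mn hmn
        rw [hT, Finset.mem_filter] at hmn
        obtain ⟨hmnS, hpd, hdvd⟩ := hmn
        rw [hS, Finset.mem_product] at hmnS
        rw [hdp] at hdvd
        have hpm : p ∣ mn.1 ∧ p ∣ mn.2 := by
          rcases (Nat.Prime.dvd_mul hp).1 hpd with h | h
          · refine ⟨h, ?_⟩
            have h' : (p:ℤ) ∣ (mn.1 : ℤ) := by exact_mod_cast h
            have : (p:ℤ) ∣ (mn.2 : ℤ) := by
              have := dvd_sub h' hdvd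
              simpa using this
            exact_mod_cast this
          · refine ⟨?_, h⟩
            have h' : (p:ℤ) ∣ (mn.2 : ℤ) := by exact_mod_cast h
            have : (p:ℤ) ∣ (mn.1 : ℤ) := by
              have := dvd_add hdvd h'
              simpa using this
            exact_mod_cast this
        exact Finset.mem_product.2 ⟨Finset.mem_filter.2 ⟨hmnS.1, hpm.1⟩,
          Finset.mem_filter.2 ⟨hmnS.2, hpm.2⟩⟩
      have hcard : (T.card : ℝ) ≤ ((K₁/p : ℕ) : ℝ) * ((K₂/p : ℕ) : ℝ) := by
        have := Finset.card_le_card hsub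
        rw [Finset.card_product, hcardIoc, hcardIoc] at this
        exact_mod_cast this
      have h2 : (T.card : ℝ) ≤ (2*M/p) * (2*N/p) := by
        refine hcard.trans ?_
        gcongr <;> positivity
      rw [hdp]
      calc (p:ℝ) * T.card ≤ (p:ℝ) * ((2*M/p) * (2*N/p)) := by gcongr
        _ = 4 * (M*N) / p := by field_simp; ring
        _ ≤ 8 * (M*N) / p := by
            gcongr
            norm_num
  -- put everything together
  refine le_trans (mul_le_mul_of_nonneg_left hsum hdR0) ?_
  have hsq0 : Real.sqrt (M*N) ≠ 0 := by positivity
  have hpne : (p:ℝ) ≠ 0 := ne_of_gt hp0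
  have key : (M*N)^((1:ℝ)/4+ε) * (M*N) = (M*N)^((3:ℝ)/4+ε) * Real.sqrt (M*N) := by
    rw [Real.sqrt_eq_rpow, ← Real.rpow_add hMN0,
      show ((3:ℝ)/4+ε + 1/2) = ((1:ℝ)/4+ε) + 1 by ring,
      Real.rpow_add hMN0 ((1:ℝ)/4+ε) 1, Real.rpow_one]
  calc (d:ℝ)/Real.sqrt (M*N) * (B * T.card)
      = B / Real.sqrt (M*N) * ((d:ℝ) * T.card) := by ring
    _ ≤ B / Real.sqrt (M*N) * (8*(M*N)/p) :=
        mul_le_mul_of_nonneg_left hTd (div_nonneg hB0.le (Real.sqrt_nonneg _))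
    _ = 16*C₀^2 * (((M*N)^((1:ℝ)/4+ε) * (M*N)) / (Real.sqrt (M*N) * (p:ℝ))) := by
        rw [hBdef]; field_simp; ring
    _ = 16*C₀^2 * ((M*N)^((3:ℝ)/4+ε) / (p:ℝ)) := by
        rw [key, mul_comm ((M*N)^((3:ℝ)/4+ε)) (Real.sqrt (M*N)),
          mul_div_mul_left _ _ hsq0]
    _ ≤ 16*C₀^2 * ((p:ℝ)^((1:ℝ)/2 + 4*ε)) := by
        gcongr 16*C₀^2 * ?_
        have h1 : (M*N)^((3:ℝ)/4+ε) ≤ (p:ℝ)^(((2:ℝ)+ε)*((3:ℝ)/4+ε)) := by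
          rw [Real.rpow_mul hp0.le]
          exact Real.rpow_le_rpow (le_of_lt hMN0) hMNp (by linarith)
        have h3 : (M*N)^((3:ℝ)/4+ε) / (p:ℝ) ≤ (p:ℝ)^(((2:ℝ)+ε)*((3:ℝ)/4+ε)) / (p:ℝ) := by
          gcongr
        refine h3.trans ?_
        rw [show ((p:ℝ)^(((2:ℝ)+ε)*((3:ℝ)/4+ε)) / (p:ℝ)) = (p:ℝ)^(((2:ℝ)+ε)*((3:ℝ)/4+ε) - 1) by
          rw [Real.rpow_sub hp0, Real.rpow_one]]
        exact Real.rpow_le_rpow_of_exponent_le hp1 (by nlinarith)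
    _ = 16*C₀^2 * (p:ℝ)^((1:ℝ)/2 + 4*ε) := by ring
end

section
/- Let κ be an odd integer, let c = q·r where 4 | r and gcd(q, r) = 1 (so q is odd), let m, n be integers, and let Ψ be a Dirichlet character mod c. Suppose Ψ_r and Ψ_q are Dirichlet characters mod r and mod q respectively with Ψ(x) = Ψ_r(x) Ψ_q(x) for all integers x. Then K_{κ,Ψ}(m, n; c) = K_{κ−q+1, Ψ_r}(m q̄, n q̄; r) · S_{Ψ_q}(m r̄, n r̄; q), where q̄ is an inverse of q mod r and r̄ is an inverse of r mod q (and κ − q + 1 is again odd). -/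
open Finset

/-- `e(x) = exp(2πi x)`. -/
noncomputable def eC (x : ℝ) : ℂ := Complex.exp (2 * Real.pi * Complex.I * x)

/-- `ε_d = 1` if `d ≡ 1 (mod 4)`, `ε_d = i` if `d ≡ 3 (mod 4)`. -/
noncomputable def epsd (d : ℕ) : ℂ := if d % 4 = 1 then 1 else Complex.I

/-- The twisted Kloosterman sum
`K_{κ,χ}(m,n;c) = ∑_{d mod c, (d,c)=1} ε_d^{−κ} (c|d) χ(d) e((m d + n d̄)/c)`,
where `(c|d)` is the Jacobi symbol and `d̄` is the inverse of `d` mod `c`. -/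
noncomputable def KlSum (κ : ℤ) (c : ℕ) (χ : DirichletCharacter ℂ c) (m n : ℤ) : ℂ :=
  ∑ d ∈ (Finset.Icc 1 c).filter (fun d => Nat.Coprime d c),
    (epsd d) ^ (-κ) * (jacobiSym (c : ℤ) d : ℂ) * χ ((d : ZMod c)) *
      eC ((((m * d + n * ((((d : ZMod c)⁻¹).val : ℤ))) : ℤ) : ℝ) / c)

/-- The twisted Salié sum
`S_Ψ(m,n;q) = ∑_{x mod q, (x,q)=1} (x|q) Ψ(x) e((m x + n x̄)/q)`. -/
noncomputable def SalPsi (q : ℕ) (Ψ : DirichletCharacter ℂ q) (m n : ℤ) : ℂ :=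
  ∑ x ∈ (Finset.Icc 1 q).filter (fun x => Nat.Coprime x q),
    (jacobiSym (x : ℤ) q : ℂ) * Ψ ((x : ZMod q)) *
      eC ((((m * x + n * ((((x : ZMod q)⁻¹).val : ℤ))) : ℤ) : ℝ) / q)

lemma eC_add (x y : ℝ) : eC (x + y) = eC x * eC y := by
  unfold eC
  rw [← Complex.exp_add]
  congr 1
  push_cast
  ring

lemma eC_int (k : ℤ) : eC k = 1 := by
  unfold eC
  have : 2 * (Real.pi : ℂ) * Complex.I * ((k : ℝ) : ℂ) = (k : ℤ) * (2 * Real.pi * Complex.I) := by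
    push_cast; ring
  rw [this, Complex.exp_int_mul_two_pi_mul_I]

lemma neg_one_pow_congr' {R : Type*} [Monoid R] [HasDistribNeg R] {m n : ℕ}
    (h : m % 2 = n % 2) : (-1 : R) ^ m = (-1) ^ n := by
  rcases Nat.even_or_odd m with hm | hm
  · have hn : Even n := by
      rcases hm with ⟨t, ht⟩; exact (Nat.even_iff).2 (by omega)
    rw [hm.neg_one_pow, hn.neg_one_pow]
  · have hn : Odd n := by
      rcases hm with ⟨t, ht⟩; exact (Nat.odd_iff).2 (by omega)
    rw [hm.neg_one_pow, hn.neg_one_pow]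

lemma jacobi_denom_congr {r : ℕ} (hr : r ≠ 0) (h4 : 4 ∣ r) {d a : ℕ}
    (hd : Odd d) (ha : Odd a) (hmod : d % r = a % r) :
    jacobiSym (r : ℤ) d = jacobiSym (r : ℤ) a := by
  set e := r.factorization 2 with he_def
  set s := r / 2 ^ e with hs_def
  have hs : 2 ^ e * s = r := Nat.ordProj_mul_ordCompl_eq_self r 2
  have hsodd : Odd s :=
    Nat.odd_iff.2 (Nat.two_dvd_ne_zero.1 (Nat.not_dvd_ordCompl Nat.prime_two hr))
  have hsdvd : s ∣ r := Nat.ordCompl_dvd r 2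
  have hmod4 : d % 4 = a % 4 := by
    have h1 : d % r % 4 = d % 4 := Nat.mod_mod_of_dvd d h4
    have h2 : a % r % 4 = a % 4 := Nat.mod_mod_of_dvd a h4
    omega
  have hmods : d % s = a % s := Nat.ModEq.of_dvd hsdvd hmod
  have split : ∀ x : ℕ, jacobiSym (r : ℤ) x = jacobiSym 2 x ^ e * jacobiSym (s : ℤ) x := by
    intro x
    rw [← hs]
    push_cast
    rw [jacobiSym.mul_left, jacobiSym.pow_left]
  rw [split d, split a]
  have partB : jacobiSym (s : ℤ) d = jacobiSym (s : ℤ) a := by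
    rw [jacobiSym.quadratic_reciprocity hsodd hd, jacobiSym.quadratic_reciprocity hsodd ha]
    have hsign : ((-1 : ℤ)) ^ (s / 2 * (d / 2)) = (-1) ^ (s / 2 * (a / 2)) := by
      apply neg_one_pow_congr'
      have : d / 2 % 2 = a / 2 % 2 := by omega
      rw [Nat.mul_mod, this, ← Nat.mul_mod]
    rw [hsign]
    congr 1
    apply jacobiSym.mod_left'
    push_cast
    omega
  have partA : jacobiSym 2 (d : ℕ) ^ e = jacobiSym 2 (a : ℕ) ^ e := by
    rcases Nat.even_or_odd e with heven | hodd
    · have sq : ∀ x : ℕ, Odd x → jacobiSym 2 x ^ e = 1 := by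
        intro x hx
        obtain ⟨t, ht⟩ := heven
        have hg : (2 : ℤ).gcd x = 1 := by
          have : Nat.gcd 2 x = 1 := Nat.coprime_two_left.2 hx
          simpa [Int.gcd] using this
        rw [ht, ← two_mul, pow_mul, jacobiSym.sq_one hg, one_pow]
      rw [sq d hd, sq a ha]
    · have h8 : (8 : ℕ) ∣ r := by
        have h4' : (2 : ℕ) ^ 2 ∣ r := by
          have h22 : (2 : ℕ) ^ 2 = 4 := by norm_num
          rw [h22]; exact h4
        have he2 : 2 ≤ e := by
          have := (Nat.Prime.pow_dvd_iff_le_factorization Nat.prime_two hr).1 h4'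
          simpa using this
        have h3 : 3 ≤ e := by
          rcases hodd with ⟨t, ht⟩; omega
        calc (8 : ℕ) = 2 ^ 3 := by norm_num
        _ ∣ 2 ^ e := pow_dvd_pow 2 h3
        _ ∣ r := hs ▸ Dvd.intro s rfl
      have hmod8 : d % 8 = a % 8 := by
        have h1 : d % r % 8 = d % 8 := Nat.mod_mod_of_dvd d h8
        have h2 : a % r % 8 = a % 8 := Nat.mod_mod_of_dvd a h8
        omega
      have : jacobiSym 2 d = jacobiSym 2 a := by
        rw [jacobiSym.at_two hd, jacobiSym.at_two ha]
        congr 1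
        exact (ZMod.natCast_eq_natCast_iff' d a 8).2 hmod8
      rw [this]
  rw [partA, partB]

lemma epsd_ne_zero (d : ℕ) : epsd d ≠ 0 := by
  unfold epsd; split
  · exact one_ne_zero
  · exact Complex.I_ne_zero

lemma epsd_pow_qsub1 {d q : ℕ} (hd : Odd d) (hq : Odd q) :
    epsd d ^ (q - 1) = ((-1 : ℂ)) ^ (q / 2 * (d / 2)) := by
  have hd2 := Nat.odd_iff.1 hd
  have hq2 := Nat.odd_iff.1 hq
  have hq1 : q - 1 = 2 * (q / 2) := by omega
  rcases (by omega : d % 4 = 1 ∨ d % 4 = 3) with h | h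
  · have he : epsd d = 1 := by simp [epsd, h]
    rw [he, one_pow]
    symm
    have hd4 : d / 2 % 2 = 0 := by omega
    have hmm := Nat.mul_mod (q / 2) (d / 2) 2
    rw [hd4] at hmm
    rw [neg_one_pow_congr' (show (q / 2 * (d / 2)) % 2 = 0 % 2 by omega), pow_zero]
  · have he : epsd d = Complex.I := by simp [epsd, h]
    have hd4 : d / 2 % 2 = 1 := by omega
    rw [he, hq1, pow_mul, Complex.I_sq]
    apply neg_one_pow_congr'
    have hmm := Nat.mul_mod (q / 2) (d / 2) 2
    rw [hd4] at hmm
    omega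

lemma eps_jacobi_combine {d q : ℕ} (hd : Odd d) (hq : Odd q) (κ : ℤ) :
    epsd d ^ (-κ) * ((jacobiSym (q : ℤ) d : ℤ) : ℂ) =
      epsd d ^ (-(κ - q + 1)) * ((jacobiSym (d : ℤ) q : ℤ) : ℂ) := by
  have hne : epsd d ≠ 0 := epsd_ne_zero d
  rw [jacobiSym.quadratic_reciprocity hq hd]
  have hexp : (-(κ - (q : ℤ) + 1)) = -κ + ((q - 1 : ℕ) : ℤ) := by
    have h1 : 1 ≤ q := hq.pos
    push_cast [h1]
    ring
  rw [hexp, zpow_add₀ hne, zpow_natCast, epsd_pow_qsub1 hd hq]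
  push_cast
  ring

lemma zmod_natCast_val_eq {n : ℕ} [NeZero n] (x : ZMod n) : ((x.val : ℕ) : ZMod n) = x := by
  rw [ZMod.natCast_val, ZMod.cast_id]

lemma cast_inv_unit {N M : ℕ} (h : M ∣ N) (x : ZMod N) (hx : IsUnit x) :
    ((ZMod.castHom h (ZMod M)) x⁻¹) = ((ZMod.castHom h (ZMod M)) x)⁻¹ := by
  symm
  apply ZMod.inv_eq_of_mul_eq_one
  rw [← map_mul, ZMod.mul_inv_of_unit x hx, map_one]

lemma val_inv_cast {N M : ℕ} [NeZero N] (h : M ∣ N) {d : ℕ} (hd : Nat.Coprime d N) :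
    (((((d : ZMod N)⁻¹).val) : ℕ) : ZMod M) = ((d : ZMod M))⁻¹ := by
  have h1 : ((((d : ZMod N)⁻¹).val : ℕ) : ZMod N) = (d : ZMod N)⁻¹ := zmod_natCast_val_eq _
  have h2 := congrArg (ZMod.castHom h (ZMod M)) h1
  rw [map_natCast] at h2
  rw [h2, cast_inv_unit h _ ((ZMod.isUnit_iff_coprime d N).2 hd), map_natCast]

lemma eC_split {q r : ℕ} (hq : q ≠ 0) (hr : r ≠ 0) {S T U : ℤ}
    (h : S ≡ T * q + U * r [ZMOD ((q * r : ℕ) : ℤ)]) :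
    eC ((S : ℝ) / ((q * r : ℕ) : ℝ)) = eC ((T : ℝ) / r) * eC ((U : ℝ) / q) := by
  obtain ⟨k, hk⟩ : ∃ k : ℤ, S = T * q + U * r + (q * r : ℕ) * k := by
    obtain ⟨k, hk⟩ := h.dvd
    exact ⟨-k, by push_cast at hk ⊢; linarith⟩
  have hq' : (q : ℝ) ≠ 0 := Nat.cast_ne_zero.2 hq
  have hr' : (r : ℝ) ≠ 0 := Nat.cast_ne_zero.2 hr
  have heq : (S : ℝ) / ((q * r : ℕ) : ℝ) = (T : ℝ) / r + (U : ℝ) / q + (k : ℤ) := by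
    rw [hk]
    push_cast
    field_simp
  rw [heq, eC_add, eC_add, eC_int, mul_one]

/-- Twisted multiplicativity: for `c = q r` with `4 ∣ r`, `(q, r) = 1`, and
`Ψ = Ψ_r Ψ_q`, one has `K_{κ,Ψ}(m,n;c) = K_{κ−q+1,Ψ_r}(m q̄, n q̄; r) S_{Ψ_q}(m r̄, n r̄; q)`. -/
theorem stmt6 (κ : ℤ) (hκ : Odd κ) (q r : ℕ) (h4 : 4 ∣ r) (hqr : Nat.Coprime q r)
    (m n : ℤ) (Ψ : DirichletCharacter ℂ (q * r)) (Ψr : DirichletCharacter ℂ r)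
    (Ψq : DirichletCharacter ℂ q)
    (hfac : ∀ x : ℤ, Ψ ((x : ZMod (q * r))) = Ψr ((x : ZMod r)) * Ψq ((x : ZMod q)))
    (qbar rbar : ℤ) (hqbar : (q : ℤ) * qbar ≡ 1 [ZMOD (r : ℤ)])
    (hrbar : (r : ℤ) * rbar ≡ 1 [ZMOD (q : ℤ)]) :
    KlSum κ (q * r) Ψ m n
      = KlSum (κ - q + 1) r Ψr (m * qbar) (n * qbar) * SalPsi q Ψq (m * rbar) (n * rbar) := by
  rcases Nat.eq_zero_or_pos r with hr0 | hrpos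
  · subst hr0
    have hq1 : q = 1 := by simpa [Nat.coprime_zero_right] using hqr
    subst hq1
    simp [KlSum]
  have hrne : r ≠ 0 := hrpos.ne'
  have hr4 : 4 ≤ r := Nat.le_of_dvd hrpos h4
  have hqne : q ≠ 0 := by
    rintro rfl
    have : r = 1 := by simpa [Nat.coprime_zero_left] using hqr
    omega
  have h2r : 2 ∣ r := dvd_trans (by norm_num) h4
  have hqodd : Odd q := by
    rw [Nat.odd_iff, ← Nat.not_even_iff]
    intro hev
    have h2q : 2 ∣ q := hev.two_dvd
    have := Nat.dvd_gcd h2q h2r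
    rw [hqr] at this
    omega
  haveI : NeZero q := ⟨hqne⟩
  haveI : NeZero r := ⟨hrne⟩
  haveI : NeZero (q * r) := ⟨Nat.mul_ne_zero hqne hrne⟩
  have hqrne : q * r ≠ 0 := Nat.mul_ne_zero hqne hrne
  have hqr4 : 4 ≤ q * r := le_trans hr4 (Nat.le_mul_of_pos_left r (Nat.pos_of_ne_zero hqne))
  set D := (Finset.Icc 1 (q * r)).filter (fun d => Nat.Coprime d (q * r)) with hD
  set A := (Finset.Icc 1 r).filter (fun a => Nat.Coprime a r) with hA
  set B := (Finset.Icc 1 q).filter (fun b => Nat.Coprime b q) with hB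
  set F : ℕ → ℂ := fun d =>
    (epsd d) ^ (-(κ - q + 1)) * (jacobiSym (r : ℤ) d : ℂ) * Ψr ((d : ZMod r)) *
      eC (((((m * qbar) * d + (n * qbar) * ((((d : ZMod r)⁻¹).val : ℤ))) : ℤ) : ℝ) / r) with hF
  set G : ℕ → ℂ := fun x =>
    (jacobiSym (x : ℤ) q : ℂ) * Ψq ((x : ZMod q)) *
      eC (((((m * rbar) * x + (n * rbar) * ((((x : ZMod q)⁻¹).val : ℤ))) : ℤ) : ℝ) / q) with hG
  have hKl : KlSum (κ - q + 1) r Ψr (m * qbar) (n * qbar) = ∑ a ∈ A, F a := rfl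
  have hSal : SalPsi q Ψq (m * rbar) (n * rbar) = ∑ b ∈ B, G b := rfl
  rw [hKl, hSal, Finset.sum_mul_sum, ← Finset.sum_product' A B (fun a b => F a * G b)]
  set iF : ℕ → ℕ × ℕ := fun d => ((d : ZMod r).val, if q = 1 then 1 else (d : ZMod q).val) with hiF
  set jF : ℕ × ℕ → ℕ :=
    fun p => ((ZMod.chineseRemainder hqr).symm ((p.2 : ZMod q), (p.1 : ZMod r))).val with hjF
  -- generic facts
  have hcopA : ∀ {x c : ℕ}, c ≠ 0 → Nat.Coprime x c → Nat.Coprime (x % c) c := by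
    intro x c hc hx
    have h1 : Nat.gcd c x = Nat.gcd (x % c) c := Nat.gcd_rec c x
    have h2 : Nat.gcd c x = 1 := Nat.coprime_comm.mp hx
    rw [Nat.Coprime, ← h1, h2]
  have hmodne : ∀ {x c : ℕ}, 4 ≤ c → Nat.Coprime (x % c) c → x % c ≠ 0 := by
    intro x c hc hx h0
    rw [h0] at hx
    have := Nat.coprime_zero_left c |>.mp hx
    omega
  have hcopB : ∀ {x c : ℕ}, Nat.Coprime (x % c) c → Nat.Coprime x c := by
    intro x c hx
    have h1 : Nat.gcd c x = Nat.gcd (x % c) c := Nat.gcd_rec c x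
    have h2 : Nat.gcd c x = 1 := by rw [h1]; exact hx
    exact Nat.coprime_comm.mp h2
  have hCRTnat : ∀ x : ℕ, (ZMod.chineseRemainder hqr) ((x : ℕ) : ZMod (q * r))
      = ((x : ZMod q), (x : ZMod r)) := by
    intro x
    have h1 : (ZMod.chineseRemainder hqr) ((x : ℕ) : ZMod (q * r)) = ((x : ℕ) : ZMod q × ZMod r) :=
      map_natCast (ZMod.chineseRemainder hqr) x
    rw [h1]
    exact Prod.ext (Prod.fst_natCast x) (Prod.snd_natCast x)
  apply Finset.sum_nbij' iF jF
  · -- maps D into A ×ˢ B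
    intro d hd
    rw [Finset.mem_filter, Finset.mem_Icc] at hd
    obtain ⟨⟨hd1, hd2⟩, hdcop⟩ := hd
    have hdr : Nat.Coprime d r := (Nat.coprime_mul_iff_right.1 hdcop).2
    have hdq : Nat.Coprime d q := (Nat.coprime_mul_iff_right.1 hdcop).1
    rw [Finset.mem_product]
    constructor
    · rw [hA, Finset.mem_filter, Finset.mem_Icc, hiF]
      have hval : ((d : ZMod r)).val = d % r := ZMod.val_natCast r d
      have hcop : Nat.Coprime (d % r) r := hcopA hrne hdr
      have hne : d % r ≠ 0 := hmodne hr4 hcop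
      have hlt : d % r < r := Nat.mod_lt d hrpos
      simp only [hval]
      exact ⟨⟨by omega, by omega⟩, hcop⟩
    · rw [hB, Finset.mem_filter, Finset.mem_Icc, hiF]
      by_cases hq1 : q = 1
      · simp [hq1]
      · have hq2 : 2 ≤ q := by omega
        have hval : ((d : ZMod q)).val = d % q := ZMod.val_natCast q d
        have hcop : Nat.Coprime (d % q) q := hcopA hqne hdq
        have hne : d % q ≠ 0 := by
          intro h0
          rw [h0] at hcop
          have := Nat.coprime_zero_left q |>.mp hcop
          omega
        have hlt : d % q < q := Nat.mod_lt d (Nat.pos_of_ne_zero hqne)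
        simp only [if_neg hq1, hval]
        exact ⟨⟨by omega, by omega⟩, hcop⟩
  · -- maps A ×ˢ B into D
    intro p hp
    rw [Finset.mem_product, hA, hB, Finset.mem_filter, Finset.mem_filter,
      Finset.mem_Icc, Finset.mem_Icc] at hp
    obtain ⟨⟨⟨ha1, ha2⟩, hacop⟩, ⟨hb1, hb2⟩, hbcop⟩ := hp
    set x := (ZMod.chineseRemainder hqr).symm ((p.2 : ZMod q), (p.1 : ZMod r)) with hx
    have hkey : ((x.val : ℕ) : ZMod (q * r)) = x := zmod_natCast_val_eq x
    have hCRT : ((x.val : ZMod q), (x.val : ZMod r)) = ((p.2 : ZMod q), (p.1 : ZMod r)) := by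
      rw [← hCRTnat x.val, hkey, hx, RingEquiv.apply_symm_apply]
    have hr' : (x.val : ZMod r) = (p.1 : ZMod r) := congrArg Prod.snd hCRT
    have hq' : (x.val : ZMod q) = (p.2 : ZMod q) := congrArg Prod.fst hCRT
    have haltr : p.1 < r := by
      rcases Nat.lt_or_ge p.1 r with h | h
      · exact h
      · exfalso
        have hh : p.1 = r := by omega
        rw [hh, Nat.Coprime, Nat.gcd_self] at hacop
        omega
    have hmodr : x.val % r = p.1 := by
      have := (ZMod.natCast_eq_natCast_iff' x.val p.1 r).1 hr'
      rwa [Nat.mod_eq_of_lt haltr] at this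
    have hmodq : x.val % q = p.2 % q := (ZMod.natCast_eq_natCast_iff' x.val p.2 q).1 hq'
    have hcopr : Nat.Coprime x.val r := hcopB (by rw [hmodr]; exact hacop)
    have hcopq : Nat.Coprime x.val q := hcopB (by
      rw [hmodq]
      exact hcopA hqne hbcop)
    rw [Finset.mem_filter, Finset.mem_Icc, hjF]
    refine ⟨⟨?_, le_of_lt (ZMod.val_lt x)⟩, Nat.coprime_mul_iff_right.2 ⟨hcopq, hcopr⟩⟩
    rcases Nat.eq_zero_or_pos x.val with h0 | h1
    · exfalso
      rw [h0] at hmodr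
      simp at hmodr
      omega
    · exact h1
  · -- left inverse
    intro d hd
    rw [Finset.mem_filter, Finset.mem_Icc] at hd
    obtain ⟨⟨hd1, hd2⟩, hdcop⟩ := hd
    have hbq : ((if q = 1 then 1 else (d : ZMod q).val : ℕ) : ZMod q) = (d : ZMod q) := by
      by_cases hq1 : q = 1
      · subst hq1; exact Subsingleton.elim _ _
      · rw [if_neg hq1]; exact zmod_natCast_val_eq _
    have har : (((d : ZMod r).val : ℕ) : ZMod r) = (d : ZMod r) := zmod_natCast_val_eq _
    have hdlt : d < q * r := by
      rcases Nat.lt_or_ge d (q * r) with h | h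
      · exact h
      · have : d = q * r := by omega
        rw [this, Nat.Coprime, Nat.gcd_self] at hdcop
        omega
    simp only [hjF, hiF, hbq, har]
    rw [← hCRTnat d, RingEquiv.symm_apply_apply, ZMod.val_natCast, Nat.mod_eq_of_lt hdlt]
  · -- right inverse
    intro p hp
    rw [Finset.mem_product, hA, hB, Finset.mem_filter, Finset.mem_filter,
      Finset.mem_Icc, Finset.mem_Icc] at hp
    obtain ⟨⟨⟨ha1, ha2⟩, hacop⟩, ⟨hb1, hb2⟩, hbcop⟩ := hp
    set x := (ZMod.chineseRemainder hqr).symm ((p.2 : ZMod q), (p.1 : ZMod r)) with hx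
    have hkey : ((x.val : ℕ) : ZMod (q * r)) = x := zmod_natCast_val_eq x
    have hCRT : ((x.val : ZMod q), (x.val : ZMod r)) = ((p.2 : ZMod q), (p.1 : ZMod r)) := by
      rw [← hCRTnat x.val, hkey, hx, RingEquiv.apply_symm_apply]
    have hr' : (x.val : ZMod r) = (p.1 : ZMod r) := congrArg Prod.snd hCRT
    have hq' : (x.val : ZMod q) = (p.2 : ZMod q) := congrArg Prod.fst hCRT
    have haltr : p.1 < r := by
      rcases Nat.lt_or_ge p.1 r with h | h
      · exact h
      · exfalso
        have hh : p.1 = r := by omega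
        rw [hh, Nat.Coprime, Nat.gcd_self] at hacop
        omega
    have h1 : ((x.val : ℕ) : ZMod r).val = p.1 := by
      rw [hr', ZMod.val_natCast, Nat.mod_eq_of_lt haltr]
    have h2 : (if q = 1 then 1 else ((x.val : ℕ) : ZMod q).val) = p.2 := by
      by_cases hq1 : q = 1
      · rw [if_pos hq1]
        omega
      · have hbltq : p.2 < q := by
          rcases Nat.lt_or_ge p.2 q with h | h
          · exact h
          · exfalso
            have hh : p.2 = q := by omega
            rw [hh, Nat.Coprime, Nat.gcd_self] at hbcop
            omega
        rw [if_neg hq1, hq', ZMod.val_natCast, Nat.mod_eq_of_lt hbltq]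
    simp only [hiF, hjF]
    exact Prod.ext h1 h2
  · -- term identity
    intro d hd
    rw [Finset.mem_filter, Finset.mem_Icc] at hd
    obtain ⟨⟨hd1, hd2⟩, hdcop⟩ := hd
    have hdr : Nat.Coprime d r := (Nat.coprime_mul_iff_right.1 hdcop).2
    have hdq : Nat.Coprime d q := (Nat.coprime_mul_iff_right.1 hdcop).1
    simp only [hiF, hF, hG]
    set a : ℕ := ((d : ZMod r)).val with hadef
    set b : ℕ := (if q = 1 then 1 else ((d : ZMod q)).val) with hbdef
    have hamod : a = d % r := ZMod.val_natCast r d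
    have hdodd : Odd d := by
      rw [Nat.odd_iff, ← Nat.not_even_iff]
      intro hev
      have h1 := Nat.dvd_gcd hev.two_dvd h2r
      rw [hdr] at h1
      omega
    have haodd : Odd a := by
      rw [Nat.odd_iff]
      have h1 := Nat.mod_mod_of_dvd d h2r
      have hd2 := Nat.odd_iff.1 hdodd
      omega
    have hmod4 : d % 4 = a % 4 := by
      have := Nat.mod_mod_of_dvd d h4
      omega
    have hdra : d % r = a % r := by
      have h1 : a < r := hadef ▸ ZMod.val_lt _
      have h2 : a % r = a := Nat.mod_eq_of_lt h1
      omega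
    have hbq : ((b : ℕ) : ZMod q) = (d : ZMod q) := by
      by_cases hq1 : q = 1
      · subst hq1; exact Subsingleton.elim _ _
      · rw [hbdef, if_neg hq1]; exact zmod_natCast_val_eq _
    have har : ((a : ℕ) : ZMod r) = (d : ZMod r) := zmod_natCast_val_eq _
    have hdbq : (d : ℤ) % q = (b : ℤ) % q := by
      have hnat : d % q = b % q := by
        by_cases hq1 : q = 1
        · subst hq1; omega
        · rw [hbdef, if_neg hq1, ZMod.val_natCast]
          exact (Nat.mod_mod_of_dvd d (dvd_refl q)).symm
      exact_mod_cast congrArg (fun t : ℕ => (t : ℤ)) hnat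
    have hJsplit : (jacobiSym ((q * r : ℕ) : ℤ) d : ℂ)
        = (jacobiSym (q : ℤ) d : ℂ) * (jacobiSym (r : ℤ) d : ℂ) := by
      rw [Nat.cast_mul, jacobiSym.mul_left]
      push_cast
      ring
    have hJr : jacobiSym (r : ℤ) d = jacobiSym (r : ℤ) a :=
      jacobi_denom_congr hrne h4 hdodd haodd hdra
    have hJb : jacobiSym (d : ℤ) q = jacobiSym (b : ℤ) q := jacobiSym.mod_left' hdbq
    have hcomb := eps_jacobi_combine hdodd hqodd κ
    have heps : epsd d = epsd a := by unfold epsd; rw [hmod4]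
    have hPsi : Ψ ((d : ZMod (q * r))) = Ψr ((a : ZMod r)) * Ψq ((b : ZMod q)) := by
      have h := hfac (d : ℤ)
      push_cast at h
      rw [h, ← har, ← hbq]
    have hq0 : ((q : ℕ) : ZMod q) = 0 := ZMod.natCast_self q
    have hr0 : ((r : ℕ) : ZMod r) = 0 := ZMod.natCast_self r
    have hrrq : ((r : ℕ) : ZMod q) * ((rbar : ℤ) : ZMod q) = 1 := by
      have h := (ZMod.intCast_eq_intCast_iff ((r : ℤ) * rbar) 1 q).2 hrbar
      push_cast at h
      exact h
    have hqqr : ((q : ℕ) : ZMod r) * ((qbar : ℤ) : ZMod r) = 1 := by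
      have h := (ZMod.intCast_eq_intCast_iff ((q : ℤ) * qbar) 1 r).2 hqbar
      push_cast at h
      exact h
    have hDq : (((((d : ZMod (q * r))⁻¹).val) : ℕ) : ZMod q) = ((d : ZMod q))⁻¹ :=
      val_inv_cast (dvd_mul_right q r) hdcop
    have hDr : (((((d : ZMod (q * r))⁻¹).val) : ℕ) : ZMod r) = ((d : ZMod r))⁻¹ :=
      val_inv_cast (dvd_mul_left r q) hdcop
    have hAr : (((((a : ℕ) : ZMod r)⁻¹).val : ℕ) : ZMod r) = ((d : ZMod r))⁻¹ := by
      rw [zmod_natCast_val_eq, har]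
    have hBq : (((((b : ℕ) : ZMod q)⁻¹).val : ℕ) : ZMod q) = ((d : ZMod q))⁻¹ := by
      rw [zmod_natCast_val_eq, hbq]
    have hcong : (m * (d : ℤ) + n * ((((d : ZMod (q * r))⁻¹).val : ℕ) : ℤ))
        ≡ (m * qbar * (a : ℤ) + n * qbar * (((((a : ℕ) : ZMod r)⁻¹).val : ℕ) : ℤ)) * q
          + (m * rbar * (b : ℤ) + n * rbar * (((((b : ℕ) : ZMod q)⁻¹).val : ℕ) : ℤ)) * r
          [ZMOD ((q * r : ℕ) : ℤ)] := by
      have hco : ((q : ℤ).natAbs).Coprime ((r : ℤ).natAbs) := by simpa using hqr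
      have hmul : ((q * r : ℕ) : ℤ) = (q : ℤ) * (r : ℤ) := by push_cast; ring
      rw [hmul, ← Int.modEq_and_modEq_iff_modEq_mul hco]
      constructor
      · rw [← ZMod.intCast_eq_intCast_iff]
        push_cast
        rw [hDq, hBq, hbq, hq0]
        linear_combination (-(m * ((d : ℕ) : ZMod q) + n * (((d : ℕ) : ZMod q))⁻¹)) * hrrq
      · rw [← ZMod.intCast_eq_intCast_iff]
        push_cast
        rw [hDr, hAr, har, hr0]
        linear_combination (-(m * ((d : ℕ) : ZMod r) + n * (((d : ℕ) : ZMod r))⁻¹)) * hqqr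
    have heC := eC_split hqne hrne hcong
    have hJ : epsd d ^ (-κ) * ((jacobiSym ((q * r : ℕ) : ℤ) d : ℤ) : ℂ)
        = epsd a ^ (-(κ - q + 1)) * ((jacobiSym (r : ℤ) a : ℤ) : ℂ)
            * ((jacobiSym (b : ℤ) q : ℤ) : ℂ) := by
      calc epsd d ^ (-κ) * ((jacobiSym ((q * r : ℕ) : ℤ) d : ℤ) : ℂ)
          = (epsd d ^ (-κ) * ((jacobiSym (q : ℤ) d : ℤ) : ℂ)) * ((jacobiSym (r : ℤ) d : ℤ) : ℂ) := by
            rw [hJsplit]; ring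
        _ = (epsd d ^ (-(κ - q + 1)) * ((jacobiSym (d : ℤ) q : ℤ) : ℂ))
              * ((jacobiSym (r : ℤ) d : ℤ) : ℂ) := by rw [hcomb]
        _ = epsd a ^ (-(κ - q + 1)) * ((jacobiSym (r : ℤ) a : ℤ) : ℂ)
              * ((jacobiSym (b : ℤ) q : ℤ) : ℂ) := by rw [heps, hJb, hJr]; ring
    rw [hPsi, heC]
    linear_combination (Ψr ((a : ℕ) : ZMod r) * Ψq ((b : ℕ) : ZMod q)
      * eC ((((m * qbar * (a : ℤ) + n * qbar * (((((a : ℕ) : ZMod r)⁻¹).val : ℕ) : ℤ)) : ℤ) : ℝ) / r)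
      * eC ((((m * rbar * (b : ℤ) + n * rbar * (((((b : ℕ) : ZMod q)⁻¹).val : ℕ) : ℤ)) : ℤ) : ℝ) / q)) * hJ
end

section
/- Let c be a positive integer, let χ be a Dirichlet character mod c with conductor c⋆, and let h be a positive integer. Then | ∑_{1 ≤ d ≤ c, gcd(d,c)=1} conj(χ(d)) e(h d / c) | ≤ (c⋆)^{1/2} · τ(h) · gcd(h, c), where τ(h) denotes the number of positive divisors of h. -/
open Finset

lemma eC_nat_div (q : ℕ) [NeZero q] (j : ℕ) :
    eC ((j : ℝ) / q) = ZMod.stdAddChar ((j : ZMod q)) := by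
  have : ((j : ZMod q)) = (((j : ℤ)) : ZMod q) := by push_cast; rfl
  rw [this, ZMod.stdAddChar_coe]
  unfold eC
  congr 1
  push_cast
  ring

lemma eC_natval (n : ℕ) : eC (n : ℝ) = 1 := by
  unfold eC
  have : (2 * Real.pi * Complex.I * (n : ℝ) : ℂ) = (n : ℤ) * (2 * Real.pi * Complex.I) := by
    push_cast; ring
  rw [this, Complex.exp_int_mul_two_pi_mul_I]

lemma eC_zero : eC 0 = 1 := by unfold eC; simp

/-- sum over range q equals sum over ZMod q -/
lemma sum_range_zmod (q : ℕ) [NeZero q] (f : ZMod q → ℂ) :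
    ∑ m ∈ range q, f (m : ZMod q) = ∑ x : ZMod q, f x := by
  exact Finset.sum_nbij' (i := fun m => (m : ZMod q)) (j := fun x => x.val)
    (fun a _ => mem_univ _) (fun x _ => mem_range.mpr x.val_lt)
    (fun a ha => ZMod.val_natCast_of_lt (mem_range.mp ha))
    (fun x _ => ZMod.natCast_rightInverse x) (fun a _ => rfl)

lemma conj_stdAddChar (N : ℕ) [NeZero N] (z : ZMod N) :
    (starRingEnd ℂ) (ZMod.stdAddChar z) = ZMod.stdAddChar (-z) := by
  rw [AddChar.map_neg_eq_inv, ZMod.stdAddChar_apply,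
    ← Circle.coe_inv_eq_conj, Circle.coe_inv]

lemma card_isUnit_filter (N : ℕ) [NeZero N] :
    ((Finset.univ : Finset (ZMod N)).filter (fun x => IsUnit x)).card = N.totient := by
  classical
  rw [← ZMod.card_units_eq_totient N]
  symm
  apply Finset.card_bij (fun (u : (ZMod N)ˣ) _ => (u : ZMod N))
  · intro u _; simp [u.isUnit]
  · intro u₁ _ u₂ _ h; exact Units.ext h
  · intro x hx
    have : IsUnit x := (Finset.mem_filter.mp hx).2
    exact ⟨this.unit, mem_univ _, this.unit_spec⟩

lemma unit_sum (N : ℕ) [NeZero N] (ψ : DirichletCharacter ℂ N) :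
    ∑ x : ZMod N, ψ x * (starRingEnd ℂ) (ψ x) = (N.totient : ℂ) := by
  classical
  have hterm : ∀ x : ZMod N, ψ x * (starRingEnd ℂ) (ψ x) = if IsUnit x then 1 else 0 := by
    intro x
    by_cases hx : IsUnit x
    · rw [if_pos hx, Complex.mul_conj]
      norm_cast
      rw [Complex.normSq_eq_norm_sq]
      have := ψ.unit_norm_eq_one hx.unit
      rw [hx.unit_spec] at this
      rw [this]; norm_num
    · rw [if_neg hx, ψ.map_nonunit hx, map_zero, zero_mul]
  rw [Finset.sum_congr rfl (fun x _ => hterm x)]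
  rw [Finset.sum_boole]
  rw [card_isUnit_filter N]

lemma gauss_normSq (N : ℕ) [NeZero N] (ψ : DirichletCharacter ℂ N) (hψ : ψ.IsPrimitive) :
    gaussSum ψ ZMod.stdAddChar * (starRingEnd ℂ) (gaussSum ψ ZMod.stdAddChar) = (N : ℂ) := by
  classical
  set e := (ZMod.stdAddChar (N := N)) with he
  have hep : e.IsPrimitive := ZMod.isPrimitive_stdAddChar N
  set τ := gaussSum ψ e with hτ
  have key : ∀ b : ZMod N, ∑ a : ZMod N, e (a * b) = if b = 0 then (N : ℂ) else 0 := by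
    intro b
    have := AddChar.sum_mulShift b hep
    rw [this]
    split <;> simp [ZMod.card]
  have way1 : ∑ a : ZMod N, gaussSum ψ (e.mulShift a) * (starRingEnd ℂ) (gaussSum ψ (e.mulShift a))
      = (N.totient : ℂ) * (τ * (starRingEnd ℂ) τ) := by
    have : ∀ a : ZMod N, gaussSum ψ (e.mulShift a) * (starRingEnd ℂ) (gaussSum ψ (e.mulShift a))
        = (ψ⁻¹ a * (starRingEnd ℂ) (ψ⁻¹ a)) * (τ * (starRingEnd ℂ) τ) := by
      intro a
      rw [gaussSum_mulShift_of_isPrimitive e hψ a, map_mul]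
      ring
    rw [Finset.sum_congr rfl (fun a _ => this a), ← Finset.sum_mul, unit_sum N ψ⁻¹]
  have way2 : ∑ a : ZMod N, gaussSum ψ (e.mulShift a) * (starRingEnd ℂ) (gaussSum ψ (e.mulShift a))
      = (N : ℂ) * (N.totient : ℂ) := by
    have expand : ∀ a : ZMod N, gaussSum ψ (e.mulShift a) * (starRingEnd ℂ) (gaussSum ψ (e.mulShift a))
        = ∑ x : ZMod N, ∑ y : ZMod N, (ψ x * (starRingEnd ℂ) (ψ y)) * e (a * (x - y)) := by
      intro a
      rw [gaussSum, map_sum, Finset.sum_mul_sum]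
      refine Finset.sum_congr rfl fun x _ => Finset.sum_congr rfl fun y _ => ?_
      rw [map_mul, AddChar.mulShift_apply, AddChar.mulShift_apply, conj_stdAddChar]
      have : a * (x - y) = a * x + -(a * y) := by ring
      rw [this, AddChar.map_add_eq_mul]
      ring
    rw [Finset.sum_congr rfl (fun a _ => expand a), Finset.sum_comm]
    have swap2 : ∀ x : ZMod N, ∑ a : ZMod N, ∑ y : ZMod N, (ψ x * (starRingEnd ℂ) (ψ y)) * e (a * (x - y))
        = (ψ x * (starRingEnd ℂ) (ψ x)) * (N : ℂ) := by
      intro x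
      rw [Finset.sum_comm]
      have inner : ∀ y : ZMod N, ∑ a : ZMod N, (ψ x * (starRingEnd ℂ) (ψ y)) * e (a * (x - y))
          = (ψ x * (starRingEnd ℂ) (ψ y)) * (if x - y = 0 then (N : ℂ) else 0) := by
        intro y
        rw [← Finset.mul_sum, key (x - y)]
      rw [Finset.sum_congr rfl (fun y _ => inner y)]
      have h2 : ∀ y : ZMod N, (ψ x * (starRingEnd ℂ) (ψ y)) * (if x - y = 0 then (N:ℂ) else 0)
          = if y = x then (ψ x * (starRingEnd ℂ) (ψ y)) * (N : ℂ) else 0 := by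
        intro y
        rcases eq_or_ne y x with rfl | hyx
        · simp
        · rw [if_neg hyx, if_neg (by simpa [sub_eq_zero] using (Ne.symm hyx)), mul_zero]
      rw [Finset.sum_congr rfl (fun y _ => h2 y), Finset.sum_ite_eq' Finset.univ x, if_pos (mem_univ x)]
    rw [Finset.sum_congr rfl (fun x _ => swap2 x), ← Finset.sum_mul, unit_sum N ψ]
    ring
  have htot : (N.totient : ℂ) ≠ 0 := by
    exact_mod_cast Nat.cast_ne_zero.mpr (Nat.totient_pos.mpr (Nat.pos_of_ne_zero (NeZero.ne N))).ne'
  apply mul_left_cancel₀ htot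
  rw [way1.symm.trans way2]; ring

lemma abs_gaussSum (N : ℕ) [NeZero N] (ψ : DirichletCharacter ℂ N) (hψ : ψ.IsPrimitive) :
    ‖gaussSum ψ ZMod.stdAddChar‖ = Real.sqrt N := by
  have h := gauss_normSq N ψ hψ
  rw [Complex.mul_conj] at h
  have h2 : Complex.normSq (gaussSum ψ ZMod.stdAddChar) = (N : ℝ) := by exact_mod_cast h
  rw [Complex.norm_def, h2]

lemma abs_gaussSum_mulShift_le (N : ℕ) [NeZero N] (ψ : DirichletCharacter ℂ N)
    (hψ : ψ.IsPrimitive) (a : ZMod N) :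
    ‖gaussSum ψ (ZMod.stdAddChar.mulShift a)‖ ≤ Real.sqrt N := by
  rw [gaussSum_mulShift_of_isPrimitive _ hψ a, norm_mul, abs_gaussSum N ψ hψ]
  have h1 : ‖ψ⁻¹ a‖ ≤ 1 := by
    exact DirichletCharacter.norm_le_one ψ⁻¹ a
  nlinarith [Real.sqrt_nonneg (N : ℝ), norm_nonneg (ψ⁻¹ a)]

/-- geometric sum / orthogonality -/
lemma geo_sum (r n : ℕ) [NeZero r] :
    ∑ b ∈ range r, eC (((n * b : ℕ) : ℝ) / r) = if r ∣ n then (r : ℂ) else 0 := by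
  classical
  have h1 : ∀ b : ℕ, eC (((n * b : ℕ) : ℝ) / r) = ZMod.stdAddChar ((b : ZMod r) * (n : ZMod r)) := by
    intro b
    rw [eC_nat_div r (n * b)]
    congr 1
    push_cast
    ring
  rw [Finset.sum_congr rfl (fun b _ => h1 b),
    sum_range_zmod r (fun x => ZMod.stdAddChar (x * (n : ZMod r))),
    AddChar.sum_mulShift _ (ZMod.isPrimitive_stdAddChar r)]
  have : ((n : ZMod r) = 0) ↔ r ∣ n := ZMod.natCast_eq_zero_iff n r
  split_ifs with h h' h'
  · simp [ZMod.card]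
  · exact absurd (this.mp h) h'
  · exact absurd (this.mpr h') h
  · simp

/-- Main local bound: for primitive ψ mod N, N ∣ q, the twisted sum mod q. -/
lemma bound_q (N q n : ℕ) [NeZero N] (ψ : DirichletCharacter ℂ N) (hψ : ψ.IsPrimitive)
    (hNq : N ∣ q) (hq : q ≠ 0) :
    ‖∑ m ∈ range q, ψ ((m : ZMod N)) * eC (((n * m : ℕ) : ℝ) / q)‖
      ≤ if (q / N) ∣ n then ((q / N : ℕ) : ℝ) * Real.sqrt N else 0 := by
  classical
  have hN0 : N ≠ 0 := NeZero.ne N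
  set r := q / N with hr
  have hqNr : q = N * r := (Nat.mul_div_cancel' hNq).symm
  have hr0 : r ≠ 0 := by
    intro h0; rw [h0, mul_zero] at hqNr; exact hq hqNr
  haveI : NeZero r := ⟨hr0⟩
  -- reindex m = a + N * b
  have reidx : ∑ m ∈ range q, ψ ((m : ZMod N)) * eC (((n * m : ℕ) : ℝ) / q)
      = ∑ p ∈ range N ×ˢ range r, ψ (((p.1 + N * p.2 : ℕ) : ZMod N))
          * eC (((n * (p.1 + N * p.2) : ℕ) : ℝ) / q) := by
    apply Finset.sum_nbij' (i := fun m => (m % N, m / N)) (j := fun p => p.1 + N * p.2)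
    · intro m hm
      rw [mem_product, mem_range, mem_range]
      refine ⟨Nat.mod_lt _ (Nat.pos_of_ne_zero hN0), ?_⟩
      rw [Nat.div_lt_iff_lt_mul (Nat.pos_of_ne_zero hN0)]
      rw [mem_range] at hm
      calc m < q := hm
        _ = r * N := by rw [hqNr]; ring
    · intro p hp
      rw [mem_product, mem_range, mem_range] at hp
      rw [mem_range]
      calc p.1 + N * p.2 < N + N * p.2 := Nat.add_lt_add_right hp.1 _
        _ = N * (p.2 + 1) := by ring
        _ ≤ N * r := Nat.mul_le_mul_left N (Nat.succ_le_of_lt hp.2)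
        _ = q := hqNr.symm
    · intro m _; exact Nat.mod_add_div m N
    · intro p hp
      rw [mem_product, mem_range, mem_range] at hp
      have h1 : (p.1 + N * p.2) % N = p.1 := by
        rw [Nat.add_mul_mod_self_left, Nat.mod_eq_of_lt hp.1]
      have h2 : (p.1 + N * p.2) / N = p.2 := by
        rw [Nat.add_mul_div_left _ _ (Nat.pos_of_ne_zero hN0), Nat.div_eq_of_lt hp.1, zero_add]
      exact Prod.ext h1 h2
    · intro m _
      rw [Nat.mod_add_div m N]
  rw [reidx, Finset.sum_product]
  -- pointwise factorization
  have factor : ∀ a ∈ range N, ∀ b ∈ range r,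
      ψ (((a + N * b : ℕ) : ZMod N)) * eC (((n * (a + N * b) : ℕ) : ℝ) / q)
      = (ψ ((a : ZMod N)) * eC (((n * a : ℕ) : ℝ) / q)) * eC (((n * b : ℕ) : ℝ) / r) := by
    intro a _ b _
    have hcast : (((a + N * b : ℕ) : ZMod N)) = (a : ZMod N) := by
      push_cast
      simp [ZMod.natCast_self]
    have hreal : ((n * (a + N * b) : ℕ) : ℝ) / q = ((n * a : ℕ) : ℝ) / q + ((n * b : ℕ) : ℝ) / r := by
      have hqR : (q : ℝ) = (N : ℝ) * r := by rw [hqNr]; push_cast; ring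
      field_simp [hqR]
      push_cast
      rw [hqR]
      ring
    rw [hcast, hreal, eC_add]
    ring
  rw [Finset.sum_congr rfl (fun a ha => Finset.sum_congr rfl (fun b hb => factor a ha b hb))]
  have : ∑ a ∈ range N, ∑ b ∈ range r,
      (ψ ((a : ZMod N)) * eC (((n * a : ℕ) : ℝ) / q)) * eC (((n * b : ℕ) : ℝ) / r)
      = (∑ a ∈ range N, ψ ((a : ZMod N)) * eC (((n * a : ℕ) : ℝ) / q))
        * (if r ∣ n then (r : ℂ) else 0) := by
    rw [Finset.sum_mul]
    exact Finset.sum_congr rfl fun a _ => by rw [← Finset.mul_sum, geo_sum r n]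
  rw [this]
  by_cases hrn : r ∣ n
  · rw [if_pos hrn, if_pos hrn, norm_mul]
    obtain ⟨n', rfl⟩ := hrn
    -- rewrite inner eC-argument to level N
    have harg : ∀ a : ℕ, ((r * n' * a : ℕ) : ℝ) / q = ((n' * a : ℕ) : ℝ) / N := by
      intro a
      have hqR : (q : ℝ) = (N : ℝ) * r := by rw [hqNr]; push_cast; ring
      have hNR : (N : ℝ) ≠ 0 := Nat.cast_ne_zero.mpr hN0
      have hrR : (r : ℝ) ≠ 0 := Nat.cast_ne_zero.mpr hr0
      field_simp [hqR]
      push_cast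
      rw [hqR]
      ring
    have hgauss : ∑ a ∈ range N, ψ ((a : ZMod N)) * eC (((r * n' * a : ℕ) : ℝ) / q)
        = gaussSum ψ (ZMod.stdAddChar.mulShift ((n' : ZMod N))) := by
      have hpt : ∀ a : ℕ, ψ ((a : ZMod N)) * eC (((r * n' * a : ℕ) : ℝ) / q)
          = ψ ((a : ZMod N)) * ZMod.stdAddChar ((n' : ZMod N) * (a : ZMod N)) := by
        intro a
        rw [harg a, eC_nat_div N (n' * a)]
        push_cast
        ring_nf
      rw [Finset.sum_congr rfl (fun a _ => hpt a),
        sum_range_zmod N (fun x => ψ x * ZMod.stdAddChar ((n' : ZMod N) * x))]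
      rw [gaussSum]
      exact Finset.sum_congr rfl fun x _ => by rw [AddChar.mulShift_apply]
    rw [hgauss]
    have h1 : ‖(r : ℂ)‖ = (r : ℝ) := by
      rw [Complex.norm_natCast]
    rw [h1]
    have := abs_gaussSum_mulShift_le N ψ hψ ((n' : ZMod N))
    have hrnn : (0 : ℝ) ≤ (r : ℝ) := Nat.cast_nonneg r
    nlinarith [norm_nonneg (gaussSum ψ (ZMod.stdAddChar.mulShift ((n' : ZMod N))))]
  · rw [if_neg hrn, if_neg hrn, mul_zero, norm_zero]

open DirichletCharacter in
lemma star_changeLevel {n m : ℕ} (hm : n ∣ m) (χ₀ : DirichletCharacter ℂ n) :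
    star (changeLevel hm χ₀) = changeLevel hm (star χ₀) := by
  apply MulChar.ext
  intro u
  rw [MulChar.star_apply, changeLevel_eq_cast_of_dvd _ hm u, changeLevel_eq_cast_of_dvd _ hm u,
    MulChar.star_apply]

open DirichletCharacter in
lemma factorsThrough_star {n d : ℕ} (χ : DirichletCharacter ℂ n) (h : FactorsThrough χ d) :
    FactorsThrough (star χ) d := by
  obtain ⟨hd, χ₀, hχ⟩ := h
  exact ⟨hd, star χ₀, by rw [hχ, star_changeLevel]⟩

open DirichletCharacter in
lemma conductor_star {n : ℕ} (χ : DirichletCharacter ℂ n) :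
    conductor (star χ) = conductor χ := by
  have hset : conductorSet (star χ) = conductorSet χ := by
    ext d
    constructor
    · intro hd
      have := factorsThrough_star _ hd
      rwa [star_star] at this
    · intro hd
      exact factorsThrough_star _ hd
  rw [show conductor (star χ) = sInf (conductorSet (star χ)) from rfl, hset]; rfl

open ArithmeticFunction in
lemma moebius_divisor_sum (g : ℕ) :
    ∑ t ∈ g.divisors, ((moebius t : ℤ) : ℂ) = if g = 1 then 1 else 0 := by
  have h1 := ArithmeticFunction.coe_mul_zeta_apply (R := ℂ)
    (f := (moebius : ArithmeticFunction ℤ)) (x := g)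
  rw [ArithmeticFunction.coe_moebius_mul_coe_zeta, ArithmeticFunction.one_apply] at h1
  simp only [ArithmeticFunction.intCoe_apply] at h1
  exact h1.symm

open ArithmeticFunction in
lemma moebius_indicator (d k : ℕ) (hk : k ≠ 0) :
    (if Nat.Coprime d k then (1 : ℂ) else 0)
      = ∑ t ∈ k.divisors, (if t ∣ d then ((moebius t : ℤ) : ℂ) else 0) := by
  classical
  have hdiv : (Nat.gcd d k).divisors = k.divisors.filter (fun t => t ∣ d) := by
    ext t
    simp only [Nat.mem_divisors, Finset.mem_filter]
    constructor
    · rintro ⟨ht, -⟩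
      exact ⟨⟨(Nat.dvd_gcd_iff.mp ht).2, hk⟩, (Nat.dvd_gcd_iff.mp ht).1⟩
    · rintro ⟨⟨htk, -⟩, htd⟩
      exact ⟨Nat.dvd_gcd htd htk, Nat.gcd_ne_zero_right hk⟩
  rw [← Finset.sum_filter, ← hdiv, moebius_divisor_sum]

open ArithmeticFunction in
lemma abs_moebius_le (t : ℕ) : ‖((moebius t : ℤ) : ℂ)‖ ≤ 1 := by
  by_cases hsq : Squarefree t
  · rw [moebius_apply_of_squarefree hsq]
    push_cast
    rw [norm_pow]
    simp
  · rw [moebius_eq_zero_of_not_squarefree hsq]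
    simp

lemma sum_multiples (c t : ℕ) (ht : t ∣ c) (ht0 : t ≠ 0) (F : ℕ → ℂ) :
    ∑ d ∈ (range c).filter (fun d => t ∣ d), F d = ∑ m ∈ range (c / t), F (t * m) := by
  symm
  apply Finset.sum_nbij' (i := fun m => t * m) (j := fun d => d / t)
  · intro m hm
    rw [mem_range] at hm
    rw [mem_filter, mem_range]
    constructor
    · have h2 : t * m < t * (c / t) := by
        exact (Nat.mul_lt_mul_left (Nat.pos_of_ne_zero ht0)).mpr hm
      rwa [Nat.mul_div_cancel' ht] at h2
    · exact Dvd.intro m rfl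
  · intro d hd
    rw [mem_filter, mem_range] at hd
    rw [mem_range]
    exact Nat.div_lt_div_of_lt_of_dvd ht hd.1
  · intro m _
    exact Nat.mul_div_cancel_left m (Nat.pos_of_ne_zero ht0)
  · intro d hd
    rw [mem_filter] at hd
    exact Nat.mul_div_cancel' hd.2
  · intro m _; rfl


/-- Bound for the incomplete Gauss sum: for a Dirichlet character `χ` mod `c` with
conductor `c⋆` and a positive integer `h`,
`|∑_{d mod c, (d,c)=1} conj(χ(d)) e(h d / c)| ≤ (c⋆)^{1/2} τ(h) (h,c)`. -/
theorem stmt9 (c : ℕ) (hc : 0 < c) (χ : DirichletCharacter ℂ c) (h : ℕ) (hh : 0 < h) :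
    ‖∑ d ∈ (Finset.Icc 1 c).filter (fun d => Nat.Coprime d c),
        (starRingEnd ℂ) (χ ((d : ZMod c))) * eC (((h * d : ℕ) : ℝ) / c)‖
      ≤ Real.sqrt (χ.conductor) * (h.divisors.card : ℝ) * (Nat.gcd h c : ℝ) := by
  classical
  haveI : NeZero c := ⟨hc.ne'⟩
  set N := χ.conductor with hNdef
  have hN0 : N ≠ 0 := DirichletCharacter.conductor_ne_zero χ
  haveI : NeZero N := ⟨hN0⟩
  have hNc : N ∣ c := DirichletCharacter.conductor_dvd_level χ
  set ψ : DirichletCharacter ℂ N := star χ.primitiveCharacter with hψdef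
  have hψprim : ψ.IsPrimitive := by
    show DirichletCharacter.conductor ψ = N
    rw [hψdef, conductor_star]
    exact χ.primitiveCharacter_isPrimitive
  have hstarχ : star χ = DirichletCharacter.changeLevel hNc ψ := by
    have h1 : χ = DirichletCharacter.changeLevel hNc χ.primitiveCharacter :=
      (χ.factorsThrough_conductor).eq_changeLevel
    rw [hψdef, ← star_changeLevel, ← h1]
  -- the set of primes dividing c but not N
  set k : ℕ := ∏ p ∈ c.primeFactors.filter (fun p => ¬ p ∣ N), p with hkdef
  have hk_dvd : k ∣ c :=
    dvd_trans (Finset.prod_dvd_prod_of_subset _ _ _ (filter_subset _ _))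
      (Nat.prod_primeFactors_dvd c)
  have hk0 : k ≠ 0 := by
    intro h0
    rw [h0] at hk_dvd
    exact hc.ne' (Nat.eq_zero_of_zero_dvd hk_dvd)
  have hkN : Nat.Coprime k N := by
    apply Nat.Coprime.prod_left
    intro p hp
    rw [mem_filter] at hp
    exact (Nat.prime_of_mem_primeFactors hp.1).coprime_iff_not_dvd.mpr hp.2
  -- pointwise identity
  have point : ∀ d : ℕ, star χ ((d : ZMod c))
      = ψ ((d : ZMod N)) * (if Nat.Coprime d k then 1 else 0) := by
    intro d
    by_cases hd : Nat.Coprime d c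
    · have hdk : Nat.Coprime d k := Nat.Coprime.coprime_dvd_right hk_dvd hd
      rw [if_pos hdk, mul_one, hstarχ]
      have hu : IsUnit ((d : ZMod c)) := (ZMod.isUnit_iff_coprime d c).mpr hd
      have := DirichletCharacter.changeLevel_eq_cast_of_dvd ψ hNc hu.unit
      rw [hu.unit_spec] at this
      rw [this]
      congr 1
      exact ZMod.cast_natCast hNc d
    · have hzero : star χ ((d : ZMod c)) = 0 := by
        rw [MulChar.star_apply, MulChar.map_nonunit χ (by
          rw [ZMod.isUnit_iff_coprime]; exact hd), star_zero]
      rw [hzero]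
      by_cases hdk : Nat.Coprime d k
      · rw [if_pos hdk, mul_one]
        -- show ψ (d mod N) = 0, i.e. ¬ Coprime d N
        have hdN : ¬ Nat.Coprime d N := by
          intro hdN
          rcases Nat.Prime.not_coprime_iff_dvd.mp hd with ⟨p, hp, hpd, hpc⟩
          by_cases hpN : p ∣ N
          · have h1 : p ∣ Nat.gcd d N := Nat.dvd_gcd hpd hpN
            rw [Nat.coprime_iff_gcd_eq_one.mp hdN] at h1
            exact hp.ne_one (Nat.dvd_one.mp h1)
          · have hmem : p ∈ c.primeFactors.filter (fun p => ¬ p ∣ N) :=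
              mem_filter.mpr ⟨Nat.mem_primeFactors.mpr ⟨hp, hpd.trans (dvd_refl d) |> fun _ => hpc, hc.ne'⟩, hpN⟩
            have hpk : p ∣ k := Finset.dvd_prod_of_mem (fun p => p) hmem
            exact (Nat.Prime.not_coprime_iff_dvd.mpr ⟨p, hp, hpd, hpk⟩) hdk
        rw [MulChar.map_nonunit ψ (by
          rw [ZMod.isUnit_iff_coprime]; exact hdN)]
      · rw [if_neg hdk, mul_zero]
  -- main body
  set F : ℕ → ℂ := fun d => ψ ((d : ZMod N)) * eC (((h * d : ℕ) : ℝ) / c) with hFdef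
  -- Step 1: reduce to a sum over `range c`
  have step1 : ∑ d ∈ (Finset.Icc 1 c).filter (fun d => Nat.Coprime d c),
      (starRingEnd ℂ) (χ ((d : ZMod c))) * eC (((h * d : ℕ) : ℝ) / c)
      = ∑ d ∈ range c, star χ ((d : ZMod c)) * eC (((h * d : ℕ) : ℝ) / c) := by
    have hconv : ∀ d : ℕ, (starRingEnd ℂ) (χ ((d : ZMod c))) * eC (((h * d : ℕ) : ℝ) / c)
        = star χ ((d : ZMod c)) * eC (((h * d : ℕ) : ℝ) / c) := by
      intro d; rw [MulChar.star_apply]; rfl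
    have h1 : ∑ d ∈ (Finset.Icc 1 c).filter (fun d => Nat.Coprime d c),
        (starRingEnd ℂ) (χ ((d : ZMod c))) * eC (((h * d : ℕ) : ℝ) / c)
        = ∑ d ∈ Finset.Icc 1 c,
        (starRingEnd ℂ) (χ ((d : ZMod c))) * eC (((h * d : ℕ) : ℝ) / c) := by
      apply Finset.sum_filter_of_ne
      intro d _ hne
      by_contra hcop
      apply hne
      have hnu : ¬ IsUnit ((d : ZMod c)) := by
        rw [ZMod.isUnit_iff_coprime]; exact hcop
      rw [MulChar.map_nonunit χ hnu, map_zero, zero_mul]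
    rw [h1]
    set f : ℕ → ℂ := fun d =>
      (starRingEnd ℂ) (χ ((d : ZMod c))) * eC (((h * d : ℕ) : ℝ) / c) with hf
    have hfc0 : f c = f 0 := by
      rw [hf]
      simp only
      have e1 : ((c : ZMod c)) = ((0 : ℕ) : ZMod c) := by simp
      have e2 : ((h * c : ℕ) : ℝ) / c = ((h : ℕ) : ℝ) := by
        have : (c : ℝ) ≠ 0 := Nat.cast_ne_zero.mpr hc.ne'
        field_simp
        push_cast; ring
      have e3 : ((h * 0 : ℕ) : ℝ) / c = 0 := by simp
      rw [e1, e2, e3, eC_natval, eC_zero]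
    have h2 : ∑ d ∈ Finset.Icc 1 c, f d = ∑ d ∈ range c, f d := by
      rw [← Finset.Ico_add_one_right_eq_Icc, Finset.sum_Ico_succ_top (by omega) f,
        Finset.range_eq_Ico, Finset.sum_eq_sum_Ico_succ_bot hc f, hfc0]
      ring
    rw [h2]
    exact Finset.sum_congr rfl fun d _ => hconv d
  -- Step 2: Möbius expansion
  have step2 : ∑ d ∈ range c, star χ ((d : ZMod c)) * eC (((h * d : ℕ) : ℝ) / c)
      = ∑ t ∈ k.divisors, ((ArithmeticFunction.moebius t : ℤ) : ℂ)
          * ∑ d ∈ (range c).filter (fun d => t ∣ d), F d := by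
    calc ∑ d ∈ range c, star χ ((d : ZMod c)) * eC (((h * d : ℕ) : ℝ) / c)
        = ∑ d ∈ range c, (if Nat.Coprime d k then (1 : ℂ) else 0) * F d := by
          refine Finset.sum_congr rfl fun d _ => ?_
          rw [point d, hFdef]; ring
      _ = ∑ d ∈ range c, ∑ t ∈ k.divisors,
            (if t ∣ d then ((ArithmeticFunction.moebius t : ℤ) : ℂ) else 0) * F d := by
          refine Finset.sum_congr rfl fun d _ => ?_
          rw [moebius_indicator d k hk0, Finset.sum_mul]
      _ = ∑ t ∈ k.divisors, ∑ d ∈ range c,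
            (if t ∣ d then ((ArithmeticFunction.moebius t : ℤ) : ℂ) else 0) * F d :=
          Finset.sum_comm
      _ = ∑ t ∈ k.divisors, ((ArithmeticFunction.moebius t : ℤ) : ℂ)
            * ∑ d ∈ (range c).filter (fun d => t ∣ d), F d := by
          refine Finset.sum_congr rfl fun t _ => ?_
          rw [Finset.mul_sum, Finset.sum_filter]
          refine Finset.sum_congr rfl fun d _ => ?_
          split_ifs <;> simp
  -- per-divisor bound
  have hTbound : ∀ t ∈ k.divisors,
      ‖((ArithmeticFunction.moebius t : ℤ) : ℂ)
          * ∑ d ∈ (range c).filter (fun d => t ∣ d), F d‖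
      ≤ (if (c / t / N) ∣ h then ((c / t / N : ℕ) : ℝ) * Real.sqrt N else 0) := by
    intro t ht
    have htk : t ∣ k := (Nat.mem_divisors.mp ht).1
    have htc : t ∣ c := htk.trans hk_dvd
    have ht0 : t ≠ 0 := by rintro rfl; exact hk0 (Nat.eq_zero_of_zero_dvd htk)
    have hq0 : c / t ≠ 0 := (Nat.div_pos (Nat.le_of_dvd hc htc) (Nat.pos_of_ne_zero ht0)).ne'
    have htN : Nat.Coprime t N := Nat.Coprime.coprime_dvd_left htk hkN
    have hNq : N ∣ c / t := by
      have h1 : N ∣ t * (c / t) := by rw [Nat.mul_div_cancel' htc]; exact hNc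
      exact (htN.symm).dvd_of_dvd_mul_left h1
    -- rewrite the inner sum
    have inner_eq : ∑ d ∈ (range c).filter (fun d => t ∣ d), F d
        = ψ ((t : ZMod N)) * ∑ m ∈ range (c / t),
            ψ ((m : ZMod N)) * eC (((h * m : ℕ) : ℝ) / ((c / t : ℕ) : ℝ)) := by
      rw [sum_multiples c t htc ht0 F, Finset.mul_sum]
      refine Finset.sum_congr rfl fun m _ => ?_
      rw [hFdef]
      simp only
      have e1 : (((t * m : ℕ)) : ZMod N) = (t : ZMod N) * (m : ZMod N) := by push_cast; ring
      have e2 : ((h * (t * m) : ℕ) : ℝ) / c = ((h * m : ℕ) : ℝ) / ((c / t : ℕ) : ℝ) := by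
        have hc_eq : (c : ℝ) = (t : ℝ) * ((c / t : ℕ) : ℝ) := by
          rw [← Nat.cast_mul]
          exact_mod_cast congrArg (Nat.cast : ℕ → ℝ) (Nat.mul_div_cancel' htc).symm
        have htR : (t : ℝ) ≠ 0 := Nat.cast_ne_zero.mpr ht0
        have hctR : ((c / t : ℕ) : ℝ) ≠ 0 := Nat.cast_ne_zero.mpr hq0
        rw [hc_eq]
        field_simp
        push_cast
        ring
      rw [e1, e2, map_mul]
      ring
    have hb := bound_q N (c / t) h ψ hψprim hNq hq0
    rw [inner_eq, norm_mul, norm_mul]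
    have h1 := abs_moebius_le t
    have h2 : ‖ψ ((t : ZMod N))‖ ≤ 1 := by
      exact DirichletCharacter.norm_le_one ψ _
    have h3 : (0 : ℝ) ≤ if (c / t / N) ∣ h then ((c / t / N : ℕ) : ℝ) * Real.sqrt N else 0 := by
      split_ifs
      · positivity
      · exact le_refl 0
    have h4 : ‖ψ ((t : ZMod N))‖ * ‖∑ m ∈ range (c / t),
        ψ ((m : ZMod N)) * eC (((h * m : ℕ) : ℝ) / ((c / t : ℕ) : ℝ))‖
        ≤ (if (c / t / N) ∣ h then ((c / t / N : ℕ) : ℝ) * Real.sqrt N else 0) := by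
      calc ‖ψ ((t : ZMod N))‖ * ‖∑ m ∈ range (c / t),
          ψ ((m : ZMod N)) * eC (((h * m : ℕ) : ℝ) / ((c / t : ℕ) : ℝ))‖
          ≤ 1 * (if (c / t / N) ∣ h then ((c / t / N : ℕ) : ℝ) * Real.sqrt N else 0) :=
            mul_le_mul h2 hb (norm_nonneg _) zero_le_one
        _ = _ := one_mul _
    calc ‖((ArithmeticFunction.moebius t : ℤ) : ℂ)‖ * (‖ψ ((t : ZMod N))‖
          * ‖∑ m ∈ range (c / t),
              ψ ((m : ZMod N)) * eC (((h * m : ℕ) : ℝ) / ((c / t : ℕ) : ℝ))‖)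
        ≤ 1 * (if (c / t / N) ∣ h then ((c / t / N : ℕ) : ℝ) * Real.sqrt N else 0) :=
          mul_le_mul h1 h4 (mul_nonneg (norm_nonneg _) (norm_nonneg _)) zero_le_one
      _ = _ := one_mul _
  -- final combinatorial estimate
  rw [step1, step2]
  calc ‖∑ t ∈ k.divisors, ((ArithmeticFunction.moebius t : ℤ) : ℂ)
          * ∑ d ∈ (range c).filter (fun d => t ∣ d), F d‖
      ≤ ∑ t ∈ k.divisors, ‖((ArithmeticFunction.moebius t : ℤ) : ℂ)
          * ∑ d ∈ (range c).filter (fun d => t ∣ d), F d‖ := norm_sum_le _ _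
    _ ≤ ∑ t ∈ k.divisors, (if (c / t / N) ∣ h then ((c / t / N : ℕ) : ℝ) * Real.sqrt N else 0) :=
        Finset.sum_le_sum hTbound
    _ = Real.sqrt N * ∑ t ∈ k.divisors.filter (fun t => (c / t / N) ∣ h), ((c / t / N : ℕ) : ℝ) := by
        rw [← Finset.sum_filter, Finset.mul_sum]
        exact Finset.sum_congr rfl fun t _ => mul_comm _ _
    _ ≤ Real.sqrt N * ((h.divisors.card : ℝ) * (Nat.gcd h c : ℝ)) := by
        apply mul_le_mul_of_nonneg_left _ (Real.sqrt_nonneg _)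
        have hgcdpos : 0 < Nat.gcd h c := Nat.gcd_pos_of_pos_left c hh
        have each : ∀ t ∈ k.divisors.filter (fun t => (c / t / N) ∣ h),
            ((c / t / N : ℕ) : ℝ) ≤ (Nat.gcd h c : ℝ) := by
          intro t ht
          rw [mem_filter] at ht
          have htk : t ∣ k := (Nat.mem_divisors.mp ht.1).1
          have htc : t ∣ c := htk.trans hk_dvd
          have ht0 : t ≠ 0 := by rintro rfl; exact hk0 (Nat.eq_zero_of_zero_dvd htk)
          have htN : Nat.Coprime t N := Nat.Coprime.coprime_dvd_left htk hkN
          have hNq : N ∣ c / t := by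
            have h1 : N ∣ t * (c / t) := by rw [Nat.mul_div_cancel' htc]; exact hNc
            exact (htN.symm).dvd_of_dvd_mul_left h1
          have hdvd_c : (c / t / N) ∣ c := (Nat.div_dvd_of_dvd hNq).trans (Nat.div_dvd_of_dvd htc)
          have hdvd_g : (c / t / N) ∣ Nat.gcd h c := Nat.dvd_gcd ht.2 hdvd_c
          exact_mod_cast Nat.cast_le.mpr (Nat.le_of_dvd hgcdpos hdvd_g)
        have cardle : (k.divisors.filter (fun t => (c / t / N) ∣ h)).card ≤ h.divisors.card := by
          apply Finset.card_le_card_of_injOn (fun t => c / t / N)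
          · intro t ht
            rw [Finset.mem_coe, mem_filter] at ht
            exact Nat.mem_divisors.mpr ⟨ht.2, hh.ne'⟩
          · intro t1 ht1 t2 ht2 he
            simp only [Finset.coe_filter, Set.mem_setOf_eq] at ht1 ht2
            have d1 : t1 ∣ k := (Nat.mem_divisors.mp ht1.1).1
            have d2 : t2 ∣ k := (Nat.mem_divisors.mp ht2.1).1
            have c1 : t1 ∣ c := d1.trans hk_dvd
            have c2 : t2 ∣ c := d2.trans hk_dvd
            have n1 : Nat.Coprime t1 N := Nat.Coprime.coprime_dvd_left d1 hkN
            have n2 : Nat.Coprime t2 N := Nat.Coprime.coprime_dvd_left d2 hkN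
            have m1 : t1 * N ∣ c := n1.mul_dvd_of_dvd_of_dvd c1 hNc
            have m2 : t2 * N ∣ c := n2.mul_dvd_of_dvd_of_dvd c2 hNc
            simp only [Nat.div_div_eq_div_mul] at he
            have e1 : c / (c / (t1 * N)) = t1 * N := Nat.div_div_self m1 hc.ne'
            have e2 : c / (c / (t2 * N)) = t2 * N := Nat.div_div_self m2 hc.ne'
            have : t1 * N = t2 * N := by rw [← e1, ← e2, he]
            exact Nat.eq_of_mul_eq_mul_right (Nat.pos_of_ne_zero hN0) this
        calc ∑ t ∈ k.divisors.filter (fun t => (c / t / N) ∣ h), ((c / t / N : ℕ) : ℝ)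
            ≤ (k.divisors.filter (fun t => (c / t / N) ∣ h)).card • ((Nat.gcd h c : ℕ) : ℝ) :=
              Finset.sum_le_card_nsmul _ _ _ each
          _ = ((k.divisors.filter (fun t => (c / t / N) ∣ h)).card : ℝ) * (Nat.gcd h c : ℝ) := by
              rw [nsmul_eq_mul]
          _ ≤ (h.divisors.card : ℝ) * (Nat.gcd h c : ℝ) := by
              apply mul_le_mul_of_nonneg_right _ (Nat.cast_nonneg _)
              exact_mod_cast Nat.cast_le.mpr cardle
    _ = Real.sqrt N * (h.divisors.card : ℝ) * (Nat.gcd h c : ℝ) := by ring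
end

section
/- Let p be an odd prime, let N be a real number with 1 ≤ N and 8N < p, and let ℓ ∈ (ℤ/pℤ)^×. Define 𝕊_ℓ = { (u, v) ∈ (ℤ/pℤ)^× × (ℤ/pℤ)^× : u + v = ℓ, and the least nonnegative residues of u² and of v² both lie in the interval [N, 2N] }. Let a ∈ {0, 1, …, p−1} be the least nonnegative residue of ℓ^{−2} and b ∈ {0, 1, …, p−1} the least nonnegative residue of ℓ². Then |𝕊_ℓ| ≤ #{ n ∈ ℤ : |n| ≤ N and ‖(a n² + b)/p‖ ≤ 8N/p }, where ‖x‖ denotes the distance from the real number x to the nearest integer. (Indeed, the map sending (u, v) ∈ 𝕊_ℓ to the representative of u² − v² in [−N, N] is injective and lands in the displayed set.) -/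
open Finset

/-- `‖x‖`: the distance from the real number `x` to the nearest integer. -/
noncomputable def nint (x : ℝ) : ℝ := |x - (round x : ℝ)|

lemma nint_add_int (x : ℝ) (k : ℤ) : nint (x + k) = nint x := by
  unfold nint
  rw [round_add_intCast]
  push_cast
  ring_nf

lemma nint_le_self {x : ℝ} (hx : 0 ≤ x) : nint x ≤ x := by
  have h := round_le x 0
  simpa [nint, abs_of_nonneg hx] using h

lemma card_le_ncard_aux {α β : Type*} (S : Finset α) (T : Set β) (f : α → β)
    (hinj : Set.InjOn f ↑S) (hmaps : ∀ a ∈ S, f a ∈ T) (hfin : T.Finite) :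
    S.card ≤ T.ncard := by
  classical
  calc S.card = (S.image f).card := (Finset.card_image_of_injOn hinj).symm
    _ = (↑(S.image f) : Set β).ncard := (Set.ncard_coe_finset _).symm
    _ ≤ T.ncard := by
        refine Set.ncard_le_ncard ?_ hfin
        intro b hb
        simp only [Finset.coe_image, Set.mem_image, Finset.mem_coe] at hb
        obtain ⟨a, ha, rfl⟩ := hb
        exact hmaps a ha

open scoped Classical in
/-- Diophantine clustering: for `ℓ ∈ (ℤ/p)ˣ`, the number of pairs `(u,v)` of units
with `u + v = ℓ` whose squares lift to `[N, 2N]` is at most the number of integers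
`n` with `|n| ≤ N` and `‖(a n² + b)/p‖ ≤ 8N/p`, where `a` and `b` are the least
nonnegative residues of `ℓ⁻²` and `ℓ²` respectively. -/
theorem stmt11 (p : ℕ) [Fact p.Prime] (hodd : Odd p) (N : ℝ) (hN : 1 ≤ N)
    (hNp : 8 * N < p) (ℓ : (ZMod p)ˣ) :
    (Finset.univ.filter (fun uv : (ZMod p)ˣ × (ZMod p)ˣ =>
        ((uv.1 : ZMod p) + (uv.2 : ZMod p) = (ℓ : ZMod p)) ∧
        (N ≤ ((((uv.1 : ZMod p))^2).val : ℝ) ∧ ((((uv.1 : ZMod p))^2).val : ℝ) ≤ 2 * N) ∧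
        (N ≤ ((((uv.2 : ZMod p))^2).val : ℝ) ∧ ((((uv.2 : ZMod p))^2).val : ℝ) ≤ 2 * N))).card
    ≤ Set.ncard {n : ℤ | |(n : ℝ)| ≤ N ∧
        nint (((((((ℓ⁻¹ : (ZMod p)ˣ) : ZMod p))^2).val : ℝ) * (n : ℝ)^2
            + ((((ℓ : ZMod p))^2).val : ℝ)) / p) ≤ 8 * N / p} := by
  classical
  have hp : p.Prime := Fact.out
  have hp0 : (0:ℝ) < p := by exact_mod_cast hp.pos
  have hℓ : ((ℓ : ZMod p)) ≠ 0 := ℓ.ne_zero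
  have h2 : (2 : ZMod p) ≠ 0 := by
    have h : ((2 : ℕ) : ZMod p) = 0 ↔ p ∣ 2 := ZMod.natCast_eq_zero_iff 2 p
    intro hc
    have : p ∣ 2 := h.mp (by exact_mod_cast hc)
    have hp2 : p = 2 := (Nat.prime_dvd_prime_iff_eq hp Nat.prime_two).mp this
    rw [hp2] at hodd
    exact (Nat.not_odd_iff_even.mpr (by norm_num)) hodd
  have hinv : ((ℓ⁻¹ : (ZMod p)ˣ) : ZMod p) = ((ℓ : ZMod p))⁻¹ :=
    Units.val_inv_eq_inv_val ℓ
  have hvalcast : ∀ x : ZMod p, ((x.val : ℕ) : ZMod p) = x := fun x => by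
    simp [ZMod.natCast_val, ZMod.cast_id]
  -- the map
  set f : (ZMod p)ˣ × (ZMod p)ˣ → ℤ :=
    fun uv => (((uv.1 : ZMod p))^2).val - (((uv.2 : ZMod p))^2).val with hf
  refine card_le_ncard_aux _ _ f ?_ ?_ ?_
  · -- injectivity
    intro x hx y hy hxy
    simp only [Finset.coe_filter, Set.mem_setOf_eq, Finset.mem_univ, true_and] at hx hy
    obtain ⟨hxs, -, -⟩ := hx
    obtain ⟨hys, -, -⟩ := hy
    have hcast : ((x.1 : ZMod p))^2 - ((x.2 : ZMod p))^2
        = ((y.1 : ZMod p))^2 - ((y.2 : ZMod p))^2 := by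
      have := congrArg (fun n : ℤ => (n : ZMod p)) hxy
      simpa [hf, hvalcast] using this
    have h1 : (2 : ZMod p) * (x.1 : ZMod p) * (ℓ : ZMod p)
        = (2 : ZMod p) * (y.1 : ZMod p) * (ℓ : ZMod p) := by
      have ex : (2 : ZMod p) * (x.1 : ZMod p) * (ℓ : ZMod p)
          = (ℓ : ZMod p)^2 + (((x.1 : ZMod p))^2 - ((x.2 : ZMod p))^2) := by
        rw [← hxs]; ring
      have ey : (2 : ZMod p) * (y.1 : ZMod p) * (ℓ : ZMod p)
          = (ℓ : ZMod p)^2 + (((y.1 : ZMod p))^2 - ((y.2 : ZMod p))^2) := by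
        rw [← hys]; ring
      rw [ex, ey, hcast]
    have hu : (x.1 : ZMod p) = (y.1 : ZMod p) := by
      have := mul_right_cancel₀ hℓ h1
      exact mul_left_cancel₀ h2 this
    have hv : (x.2 : ZMod p) = (y.2 : ZMod p) := by
      have : (x.1 : ZMod p) + (x.2 : ZMod p) = (y.1 : ZMod p) + (y.2 : ZMod p) := by
        rw [hxs, hys]
      rw [hu] at this
      exact add_left_cancel this
    exact Prod.ext (Units.ext hu) (Units.ext hv)
  · -- maps into the set
    intro uv huv
    simp only [Finset.mem_filter, Finset.mem_univ, true_and] at huv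
    obtain ⟨hsum, ⟨hu1, hu2⟩, ⟨hv1, hv2⟩⟩ := huv
    set u : ZMod p := (uv.1 : ZMod p) with hudef
    set v : ZMod p := (uv.2 : ZMod p) with hvdef
    constructor
    · -- |n| ≤ N
      have : (f uv : ℝ) = ((u^2).val : ℝ) - ((v^2).val : ℝ) := by
        simp [hf, hudef, hvdef]
      rw [this, abs_le]
      constructor <;> linarith
    · -- nint bound
      set n : ℤ := f uv with hn
      set m : ℤ := 2 * (((u^2).val : ℤ) + ((v^2).val : ℤ)) with hm
      set A : ℕ := ((((ℓ⁻¹ : (ZMod p)ˣ) : ZMod p))^2).val with hA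
      set B : ℕ := (((ℓ : ZMod p))^2).val with hB
      have key : ((ℓ⁻¹ : (ZMod p)ˣ) : ZMod p)^2 * (n : ZMod p)^2 + ((ℓ : ZMod p))^2
          = 2 * (u^2 + v^2) := by
        have hncast : (n : ZMod p) = u^2 - v^2 := by
          simp only [hn, hf]
          push_cast
          simp [hvalcast, hudef, hvdef]
        rw [hncast, hinv, ← hsum]
        have huv0 : u + v ≠ 0 := by rw [hsum]; exact hℓ
        field_simp
        ring
      have hdvd : (p : ℤ) ∣ ((A : ℤ) * n^2 + (B : ℤ) - m) := by
        have hzero : (((A : ℤ) * n^2 + (B : ℤ) - m : ℤ) : ZMod p) = 0 := by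
          push_cast [hm, hA, hB]
          simp only [hvalcast]
          rw [hinv] at key
          linear_combination key
        exact (ZMod.intCast_zmod_eq_zero_iff_dvd _ p).mp hzero
      obtain ⟨k, hk⟩ := hdvd
      have hkR : (A : ℝ) * (n : ℝ)^2 + (B : ℝ) = (m : ℝ) + (p : ℝ) * k := by
        have hZ : (A : ℤ) * n^2 + (B : ℤ) = m + p * k := by linarith
        exact_mod_cast congrArg (fun z : ℤ => (z : ℝ)) hZ
      have hdivsplit : ((A : ℝ) * (n : ℝ)^2 + (B : ℝ)) / p = (m : ℝ)/p + k := by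
        rw [hkR, add_div, mul_div_cancel_left₀ _ (ne_of_gt hp0)]
      have hm8 : (m : ℝ) ≤ 8 * N := by
        rw [hm]; push_cast; linarith
      have hm0 : (0 : ℝ) ≤ (m : ℝ) := by
        rw [hm]; push_cast; positivity
      calc nint (((A : ℝ) * (n : ℝ)^2 + (B : ℝ)) / p)
          = nint ((m : ℝ)/p + k) := by rw [hdivsplit]
        _ = nint ((m : ℝ)/p) := nint_add_int _ _
        _ ≤ (m : ℝ)/p := nint_le_self (by positivity)
        _ ≤ 8 * N / p := by gcongr
  · -- finiteness
    refine Set.Finite.subset (Set.finite_Icc (-⌈N⌉) ⌈N⌉) ?_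
    intro n hn
    obtain ⟨hn1, -⟩ := hn
    have hceil : (|n| : ℝ) ≤ (⌈N⌉ : ℝ) := by
      push_cast
      exact le_trans hn1 (Int.le_ceil N)
    have : |n| ≤ ⌈N⌉ := by exact_mod_cast hceil
    exact Set.mem_Icc.mpr (abs_le.mp this)
end

section
/- Let p be a prime and let δ₂, δ₄, δ₅ ∈ (0, 1). For ℓ ∈ (ℤ/pℤ)^×, let L(ℓ) ∈ {0, 1, …, p−1} denote the least nonnegative residue of ℓ^{−2} mod p. Then #{ ℓ ∈ (ℤ/pℤ)^× : there exist integers h, a, b with 1 ≤ h ≤ p^{δ₅}, 1 ≤ b ≤ p^{δ₂}, and |h·L(ℓ)/p − a/b| < 1/(b p^{δ₄}) } ≤ 8 p^{1 + δ₂ + δ₅ − δ₄}. -/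
open Finset

/-- Bound for the exceptional set `ℋ₂`: the number of `ℓ ∈ (ℤ/p)ˣ` such that some
multiple `h·L(ℓ)/p` (with `1 ≤ h ≤ p^{δ₅}`, and `L(ℓ)` the least nonnegative residue
of `ℓ⁻²`) admits an abnormally good rational approximation with denominator
`1 ≤ b ≤ p^{δ₂}` is at most `8 p^{1+δ₂+δ₅−δ₄}`. -/
theorem stmt13 (p : ℕ) [Fact p.Prime] (δ₂ δ₄ δ₅ : ℝ)
    (h₂ : δ₂ ∈ Set.Ioo (0 : ℝ) 1) (h₄ : δ₄ ∈ Set.Ioo (0 : ℝ) 1)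
    (h₅ : δ₅ ∈ Set.Ioo (0 : ℝ) 1) :
    (Set.ncard {ℓ : (ZMod p)ˣ | ∃ h a b : ℤ,
        1 ≤ h ∧ (h : ℝ) ≤ (p : ℝ) ^ δ₅ ∧ 1 ≤ b ∧ (b : ℝ) ≤ (p : ℝ) ^ δ₂ ∧
        |(h : ℝ) * (((((ℓ⁻¹ : (ZMod p)ˣ) : ZMod p))^2).val : ℝ) / p - (a : ℝ) / (b : ℝ)|
          < 1 / ((b : ℝ) * (p : ℝ) ^ δ₄)} : ℝ)
      ≤ 8 * (p : ℝ) ^ ((1 : ℝ) + δ₂ + δ₅ - δ₄) := by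
  classical
  obtain ⟨hδ₂0, hδ₂1⟩ := h₂
  obtain ⟨hδ₄0, hδ₄1⟩ := h₄
  obtain ⟨hδ₅0, hδ₅1⟩ := h₅
  have hp : p.Prime := Fact.out
  haveI : NeZero p := ⟨hp.ne_zero⟩
  have hp0 : (0:ℝ) < p := by exact_mod_cast hp.pos
  have hp1 : (1:ℝ) < p := by exact_mod_cast hp.one_lt
  set Q : (ZMod p)ˣ → Prop := fun ℓ => ∃ h a b : ℤ,
      1 ≤ h ∧ (h : ℝ) ≤ (p : ℝ) ^ δ₅ ∧ 1 ≤ b ∧ (b : ℝ) ≤ (p : ℝ) ^ δ₂ ∧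
      |(h : ℝ) * (((((ℓ⁻¹ : (ZMod p)ˣ) : ZMod p))^2).val : ℝ) / p - (a : ℝ) / (b : ℝ)|
        < 1 / ((b : ℝ) * (p : ℝ) ^ δ₄) with hQdef
  show (Set.ncard {ℓ : (ZMod p)ˣ | Q ℓ} : ℝ) ≤ 8 * (p : ℝ) ^ ((1 : ℝ) + δ₂ + δ₅ - δ₄)
  set S : Finset (ZMod p)ˣ := Finset.univ.filter Q with hSdef
  have hncard : Set.ncard {ℓ : (ZMod p)ˣ | Q ℓ} = S.card := by
    rw [Set.ncard_eq_toFinset_card']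
    congr 1
    ext ℓ
    simp [hSdef]
  set H : ℤ := ⌊(p:ℝ)^δ₅⌋ with hHdef
  set B : ℤ := ⌊(p:ℝ)^δ₂⌋ with hBdef
  set M : ℤ := ⌊(p:ℝ)^(1-δ₄)⌋ with hMdef
  have hH1 : (1:ℤ) ≤ H := Int.le_floor.mpr (by
    push_cast; exact Real.one_le_rpow hp1.le hδ₅0.le)
  have hB1 : (1:ℤ) ≤ B := Int.le_floor.mpr (by
    push_cast; exact Real.one_le_rpow hp1.le hδ₂0.le)
  have hM1 : (1:ℤ) ≤ M := Int.le_floor.mpr (by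
    push_cast; exact Real.one_le_rpow hp1.le (by linarith))
  -- a small integer whose real cast is ≤ p^δ with δ < 1 is nonzero mod p
  have hne : ∀ (b : ℤ) (δ : ℝ), δ < 1 → 1 ≤ b → (b:ℝ) ≤ (p:ℝ)^δ → ((b:ℤ) : ZMod p) ≠ 0 := by
    intro b δ hδ hb1 hble hzero
    have hlt : (b:ℝ) < p := by
      refine lt_of_le_of_lt hble ?_
      calc (p:ℝ)^δ < (p:ℝ)^(1:ℝ) := (Real.rpow_lt_rpow_left_iff hp1).mpr hδ
        _ = p := Real.rpow_one _
    have hbp : b < (p:ℤ) := by exact_mod_cast hlt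
    have hdvd := (ZMod.intCast_zmod_eq_zero_iff_dvd b p).mp hzero
    have := Int.le_of_dvd (by linarith) hdvd
    omega
  -- the target finset of triples (h, b, μ)
  set T : Finset (ℤ × ℤ × ℤ) :=
    (Finset.Icc 1 H) ×ˢ ((Finset.Icc 1 B) ×ˢ ((Finset.Icc (-M) M).erase 0)) with hTdef
  -- choose witnesses
  have key : ∀ ℓ : (ZMod p)ˣ, ∃ t : ℤ × ℤ × ℤ, Q ℓ →
      t ∈ T ∧ ((t.2.2 : ZMod p) = (t.2.1 : ZMod p) * (t.1 : ZMod p) * (((ℓ⁻¹ : (ZMod p)ˣ) : ZMod p))^2) := by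
    intro ℓ
    by_cases hQℓ : Q ℓ
    · obtain ⟨h, a, b, hh1, hhle, hb1, hble, happ⟩ := hQℓ
      set L : ℕ := (((ℓ⁻¹ : (ZMod p)ˣ) : ZMod p)^2).val with hLdef
      set μ : ℤ := b*h*(L:ℤ) - a*(p:ℤ) with hμdef
      have hb0 : (0:ℝ) < b := by exact_mod_cast (by omega : (0:ℤ) < b)
      have hL : ((L:ℕ) : ZMod p) = (((ℓ⁻¹ : (ZMod p)ˣ) : ZMod p))^2 := ZMod.natCast_rightInverse _
      have hμcast : ((μ:ℤ) : ZMod p) = (b : ZMod p) * (h : ZMod p) * (((ℓ⁻¹ : (ZMod p)ˣ) : ZMod p))^2 := by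
        rw [hμdef]
        push_cast [hL, ZMod.natCast_self]
        ring
      have heq : (h:ℝ) * (L:ℝ) / p - (a:ℝ) / b = (μ:ℝ) / ((b:ℝ)*p) := by
        rw [hμdef]
        push_cast
        field_simp
      have happ2 : |(μ:ℝ)| / ((b:ℝ)*p) < 1 / ((b:ℝ)*(p:ℝ)^δ₄) := by
        rw [heq, abs_div, abs_of_pos (by positivity : (0:ℝ) < (b:ℝ)*p)] at happ
        exact happ
      have hμM : |(μ:ℝ)| < (p:ℝ)^(1-δ₄) := by
        have h1 := (div_lt_iff₀ (by positivity : (0:ℝ) < (b:ℝ)*p)).mp happ2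
        have h2 : (1 / ((b:ℝ)*(p:ℝ)^δ₄)) * ((b:ℝ)*p) = (p:ℝ)^(1-δ₄) := by
          rw [Real.rpow_sub hp0, Real.rpow_one]
          field_simp
        rw [h2] at h1
        exact h1
      have hμle : |μ| ≤ M := Int.le_floor.mpr (by push_cast; exact hμM.le)
      have hμne : μ ≠ 0 := by
        intro h0
        have hx : (((ℓ⁻¹ : (ZMod p)ˣ) : ZMod p))^2 ≠ 0 := pow_ne_zero _ (Units.ne_zero _)
        have hc := hμcast
        rw [h0] at hc
        simp only [Int.cast_zero] at hc
        exact (mul_ne_zero (mul_ne_zero (hne b δ₂ hδ₂1 hb1 hble)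
          (hne h δ₅ hδ₅1 hh1 hhle)) hx) hc.symm
      refine ⟨(h, b, μ), fun _ => ⟨?_, hμcast⟩⟩
      rw [hTdef]
      simp only [Finset.mem_product, Finset.mem_Icc, Finset.mem_erase]
      have habs := abs_le.mp hμle
      exact ⟨⟨hh1, Int.le_floor.mpr hhle⟩, ⟨hb1, Int.le_floor.mpr hble⟩,
        hμne, habs.1, habs.2⟩
    · exact ⟨(0,0,0), fun hc => absurd hc hQℓ⟩
  choose F hF using key
  -- fibers of F on S have at most 2 elements
  have hfib : ∀ y ∈ S.image F, (S.filter (fun a => F a = y)).card ≤ 2 := by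
    intro y hy
    rcases (S.filter (fun a => F a = y)).eq_empty_or_nonempty with he | ⟨ℓ₀, h₀⟩
    · simp [he]
    · have hsub : S.filter (fun a => F a = y) ⊆ {ℓ₀, -ℓ₀} := by
        intro ℓ hℓ
        have hℓS := Finset.mem_filter.mp hℓ
        have h₀S := Finset.mem_filter.mp h₀
        have hQℓ : Q ℓ := (Finset.mem_filter.mp hℓS.1).2
        have hQℓ₀ : Q ℓ₀ := (Finset.mem_filter.mp h₀S.1).2
        have h1 := hF ℓ hQℓ
        have h0' := hF ℓ₀ hQℓ₀
        have hFeq : F ℓ = F ℓ₀ := by rw [hℓS.2, h₀S.2]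
        -- from T membership: coordinates nonzero mod p
        have hmem := h1.1
        rw [hTdef] at hmem
        simp only [Finset.mem_product, Finset.mem_Icc, Finset.mem_erase] at hmem
        obtain ⟨⟨hh1, hhH⟩, ⟨hb1, hbB⟩, -⟩ := hmem
        have hhz : (((F ℓ).1 : ℤ) : ZMod p) ≠ 0 := by
          refine hne _ δ₅ hδ₅1 hh1 ?_
          calc ((F ℓ).1 : ℝ) ≤ (H:ℝ) := by exact_mod_cast hhH
            _ ≤ (p:ℝ)^δ₅ := Int.floor_le _
        have hbz : (((F ℓ).2.1 : ℤ) : ZMod p) ≠ 0 := by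
          refine hne _ δ₂ hδ₂1 hb1 ?_
          calc ((F ℓ).2.1 : ℝ) ≤ (B:ℝ) := by exact_mod_cast hbB
            _ ≤ (p:ℝ)^δ₂ := Int.floor_le _
        have hc1 := h1.2
        have hc0 := h0'.2
        rw [← hFeq] at hc0
        have hsq : (((ℓ⁻¹ : (ZMod p)ˣ) : ZMod p))^2 = (((ℓ₀⁻¹ : (ZMod p)ˣ) : ZMod p))^2 :=
          mul_left_cancel₀ (mul_ne_zero hbz hhz) (hc1.symm.trans hc0)
        rcases sq_eq_sq_iff_eq_or_eq_neg.mp hsq with hcase | hcase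
        · have : ℓ⁻¹ = ℓ₀⁻¹ := Units.ext hcase
          have : ℓ = ℓ₀ := inv_injective this
          simp [this]
        · have hval : ((ℓ⁻¹ : (ZMod p)ˣ) : ZMod p) = ((-(ℓ₀⁻¹) : (ZMod p)ˣ) : ZMod p) := by
            rw [Units.val_neg]; exact hcase
          have h2 : ℓ⁻¹ = -(ℓ₀⁻¹) := Units.ext hval
          have h3 : ℓ⁻¹ = (-ℓ₀)⁻¹ := by rw [h2]; simp
          have : ℓ = -ℓ₀ := inv_injective h3
          simp [this]
      calc (S.filter (fun a => F a = y)).card ≤ ({ℓ₀, -ℓ₀} : Finset (ZMod p)ˣ).card :=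
            Finset.card_le_card hsub
        _ ≤ 2 := (Finset.card_insert_le _ _).trans (by simp)
  have himg : S.image F ⊆ T := by
    intro y hy
    obtain ⟨ℓ, hℓ, rfl⟩ := Finset.mem_image.mp hy
    exact (hF ℓ ((Finset.mem_filter.mp hℓ).2)).1
  have hcount : S.card ≤ 2 * T.card :=
    (Finset.card_le_mul_card_image S 2 hfib).trans
      (Nat.mul_le_mul_left 2 (Finset.card_le_card himg))
  -- compute the cardinality of T
  have hcardA : ((Finset.Icc (1:ℤ) H).card : ℝ) ≤ (p:ℝ)^δ₅ := by
    rw [Int.card_Icc]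
    have e : H + 1 - 1 = H := by ring
    rw [e]
    have h1 : ((H.toNat : ℕ) : ℝ) = (H:ℝ) := by
      exact_mod_cast Int.toNat_of_nonneg (by omega : (0:ℤ) ≤ H)
    rw [h1]
    exact Int.floor_le _
  have hcardB : ((Finset.Icc (1:ℤ) B).card : ℝ) ≤ (p:ℝ)^δ₂ := by
    rw [Int.card_Icc]
    have e : B + 1 - 1 = B := by ring
    rw [e]
    have h1 : ((B.toNat : ℕ) : ℝ) = (B:ℝ) := by
      exact_mod_cast Int.toNat_of_nonneg (by omega : (0:ℤ) ≤ B)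
    rw [h1]
    exact Int.floor_le _
  have hcardM : (((Finset.Icc (-M) M).erase 0).card : ℝ) ≤ 2 * (p:ℝ)^(1-δ₄) := by
    have hmem0 : (0:ℤ) ∈ Finset.Icc (-M) M := by simp only [Finset.mem_Icc]; omega
    rw [Finset.card_erase_of_mem hmem0, Int.card_Icc]
    have h1 : (M + 1 - -M).toNat - 1 = (2*M).toNat := by omega
    rw [h1]
    have h2 : (((2*M).toNat : ℕ) : ℝ) = 2 * (M:ℝ) := by
      exact_mod_cast Int.toNat_of_nonneg (by omega : (0:ℤ) ≤ 2*M)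
    rw [h2]
    have := Int.floor_le ((p:ℝ)^(1-δ₄))
    linarith
  have hTcard : (T.card : ℝ) ≤ (p:ℝ)^δ₅ * ((p:ℝ)^δ₂ * (2 * (p:ℝ)^(1-δ₄))) := by
    rw [hTdef, Finset.card_product, Finset.card_product]
    push_cast
    have h1 : (0:ℝ) ≤ ((Finset.Icc (1:ℤ) B).card : ℝ) := Nat.cast_nonneg _
    have h2 : (0:ℝ) ≤ (((Finset.Icc (-M) M).erase 0).card : ℝ) := Nat.cast_nonneg _
    gcongr <;> positivity
  rw [hncard]
  calc (S.card : ℝ) ≤ 2 * (T.card : ℝ) := by exact_mod_cast hcount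
    _ ≤ 2 * ((p:ℝ)^δ₅ * ((p:ℝ)^δ₂ * (2 * (p:ℝ)^(1-δ₄)))) := by linarith
    _ = 4 * (p:ℝ)^(δ₅ + δ₂ + (1-δ₄)) := by
        rw [Real.rpow_add hp0, Real.rpow_add hp0]; ring
    _ ≤ 8 * (p:ℝ)^((1:ℝ) + δ₂ + δ₅ - δ₄) := by
        rw [show δ₅ + δ₂ + (1-δ₄) = (1:ℝ) + δ₂ + δ₅ - δ₄ by ring]
        have hpos : (0:ℝ) ≤ (p:ℝ)^((1:ℝ) + δ₂ + δ₅ - δ₄) := Real.rpow_nonneg hp0.le _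
        linarith
end
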